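/- arXiv:1212.0915 — 6 statements merged into one kernel-verified Lean document; each statement's English description precedes it below -/
import Mathlib

section
/- Let p ≥ 5 be prime and s an integer with gcd(s(s+1), p) = 1. Define θ(s) as the Legendre symbol of 2s(s+1)(s·q_p(s) - (s+1)·q_p(s+1)) modulo p. Let t be an integer with t ≡ -1 - s (mod p) and gcd(t(t+1), p) = 1. Then θ(t) = θ(s). -/
/-- The Fermat quotient of `u` modulo `p`: the unique integer in `[0, p)`
congruent to `(u^(p-1) - 1)/p` modulo `p`. -/
def fermatQuotient (p : ℕ) (u : ℤ) : ℤ := ((u ^ (p - 1) - 1) / (p : ℤ)) % (p : ℤ)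

/-- `θ_{p,s}`: the Legendre symbol of `2s(s+1)(s·q_p(s) - (s+1)·q_p(s+1))` modulo `p`. -/
def theta (p : ℕ) [Fact p.Prime] (s : ℤ) : ℤ :=
  legendreSym p (2 * s * (s + 1) *
    (s * fermatQuotient p s - (s + 1) * fermatQuotient p (s + 1)))

private lemma pow_add_sq_dvd (a b : ℤ) :
    ∀ n : ℕ, (b ^ 2 : ℤ) ∣ (a + b) ^ n - (a ^ n + n * a ^ (n - 1) * b)
  | 0 => by simp
  | 1 => by simp
  | (n + 2) => by
    obtain ⟨c, hc⟩ := pow_add_sq_dvd a b (n + 1)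
    refine ⟨c * (a + b) + (n + 1) * a ^ n, ?_⟩
    have h2 : (n + 2 : ℕ) - 1 = n + 1 := rfl
    have h1 : (a + b) ^ (n + 2) = ((a + b) ^ (n + 1)) * (a + b) := by ring
    rw [h2, h1]
    push_cast at hc ⊢
    linear_combination (a + b) * hc

private lemma fq_neg (p : ℕ) (hp : Even (p - 1)) (u : ℤ) :
    fermatQuotient p (-u) = fermatQuotient p u := by
  unfold fermatQuotient
  rw [hp.neg_pow]

private lemma fq_shift (p : ℕ) [Fact p.Prime] (u k : ℤ) (hu : ¬ ((p : ℤ) ∣ u)) :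
    ((fermatQuotient p (u + k * p) : ZMod p)) =
      (fermatQuotient p u : ZMod p) - k * (u : ZMod p) ^ (p - 2) := by
  have hp := (Fact.out : p.Prime)
  have hp2 : 2 ≤ p := hp.two_le
  have hpz : (p : ℤ) ≠ 0 := by exact_mod_cast hp.ne_zero
  have hu0 : (u : ZMod p) ≠ 0 := fun h => hu ((ZMod.intCast_zmod_eq_zero_iff_dvd u p).1 h)
  have hd2 : (p : ℤ) ∣ u ^ (p - 1) - 1 := by
    rw [← ZMod.intCast_zmod_eq_zero_iff_dvd]
    push_cast
    simp [ZMod.pow_card_sub_one_eq_one hu0]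
  have hd1 : (p : ℤ) ∣ (u + k * p) ^ (p - 1) - 1 := by
    rw [← ZMod.intCast_zmod_eq_zero_iff_dvd]
    push_cast
    simp [ZMod.natCast_self, ZMod.pow_card_sub_one_eq_one hu0]
  obtain ⟨c, hc⟩ := pow_add_sq_dvd u (k * p) (p - 1)
  rw [show p - 1 - 1 = p - 2 by omega] at hc
  have hNc : ((p - 1 : ℕ) : ℤ) = (p : ℤ) - 1 := by
    have h1 : (1 : ℕ) ≤ p := by omega
    push_cast [Nat.cast_sub h1]
    ring
  rw [hNc] at hc
  set D1 := ((u + k * p) ^ (p - 1) - 1) / (p : ℤ) with hD1def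
  set D2 := (u ^ (p - 1) - 1) / (p : ℤ) with hD2def
  have hD1 : (p : ℤ) * D1 = (u + k * p) ^ (p - 1) - 1 := Int.mul_ediv_cancel' hd1
  have hD2 : (p : ℤ) * D2 = u ^ (p - 1) - 1 := Int.mul_ediv_cancel' hd2
  have key : D1 = D2 + ((p : ℤ) - 1) * u ^ (p - 2) * k + k ^ 2 * p * c := by
    apply mul_left_cancel₀ hpz
    linear_combination hD1 - hD2 + hc
  have hmod1 : (fermatQuotient p (u + k * p) : ZMod p) = (D1 : ZMod p) := by
    unfold fermatQuotient
    rw [Int.emod_def]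
    push_cast [ZMod.natCast_self]
    ring
  have hmod2 : (fermatQuotient p u : ZMod p) = (D2 : ZMod p) := by
    unfold fermatQuotient
    rw [Int.emod_def]
    push_cast [ZMod.natCast_self]
    ring
  rw [hmod1, hmod2, key]
  push_cast [ZMod.natCast_self]
  ring

theorem theta_neg_one_sub (p : ℕ) [Fact p.Prime] (hp : 5 ≤ p) (s t : ℤ)
    (hs : Int.gcd (s * (s + 1)) (p : ℤ) = 1)
    (ht : Int.gcd (t * (t + 1)) (p : ℤ) = 1)
    (hts : t ≡ -1 - s [ZMOD (p : ℤ)]) :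
    theta p t = theta p s := by
  have hpp := (Fact.out : p.Prime)
  have hodd : Odd p := hpp.odd_of_ne_two (by omega)
  have heven : Even (p - 1) := Nat.Odd.sub_odd hodd odd_one
  have hodd2 : Odd (p - 2) := by
    obtain ⟨m, hm⟩ := hodd
    exact ⟨m - 1, by omega⟩
  -- non-divisibility facts
  have hps : ¬ (p : ℤ) ∣ s := by
    intro h
    have h2 : (p : ℤ) ∣ (Int.gcd (s * (s + 1)) (p : ℤ) : ℤ) :=
      Int.dvd_coe_gcd (h.mul_right _) dvd_rfl
    rw [hs] at h2
    have := Int.le_of_dvd one_pos h2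
    omega
  have hps1 : ¬ (p : ℤ) ∣ (s + 1) := by
    intro h
    have h2 : (p : ℤ) ∣ (Int.gcd (s * (s + 1)) (p : ℤ) : ℤ) :=
      Int.dvd_coe_gcd (h.mul_left _) dvd_rfl
    rw [hs] at h2
    have := Int.le_of_dvd one_pos h2
    omega
  obtain ⟨k0, hk0⟩ := hts.dvd
  have hk : t = -(s + 1) + -k0 * p := by linarith
  have hk1 : t + 1 = -s + -k0 * p := by linarith
  have hQt := fq_shift p (-(s + 1)) (-k0) (by rwa [dvd_neg])
  rw [← hk, fq_neg p heven (s + 1)] at hQt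
  have hQt1 := fq_shift p (-s) (-k0) (by rwa [dvd_neg])
  rw [← hk1, fq_neg p heven s] at hQt1
  have hX1 : (((-(s + 1) : ℤ)) : ZMod p) ^ (p - 2) = -(((s : ZMod p) + 1) ^ (p - 2)) := by
    rw [show (((-(s + 1) : ℤ)) : ZMod p) = -((s : ZMod p) + 1) by push_cast; ring,
      hodd2.neg_pow]
  have hX2 : (((-s : ℤ)) : ZMod p) ^ (p - 2) = -((s : ZMod p) ^ (p - 2)) := by
    rw [show (((-s : ℤ)) : ZMod p) = -((s : ZMod p)) by push_cast; ring, hodd2.neg_pow]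
  rw [hX1] at hQt
  rw [hX2] at hQt1
  push_cast at hQt hQt1
  have hS : ((s : ZMod p)) ≠ 0 := fun h => hps ((ZMod.intCast_zmod_eq_zero_iff_dvd s p).1 h)
  have hS1 : ((s : ZMod p) + 1) ≠ 0 := by
    intro h
    apply hps1
    rw [← ZMod.intCast_zmod_eq_zero_iff_dvd]
    push_cast
    exact h
  have e1 : (s : ZMod p) ^ (p - 2) * (s : ZMod p) = 1 := by
    rw [← pow_succ, show p - 2 + 1 = p - 1 by omega]
    exact ZMod.pow_card_sub_one_eq_one hS
  have e2 : ((s : ZMod p) + 1) ^ (p - 2) * ((s : ZMod p) + 1) = 1 := by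
    rw [← pow_succ, show p - 2 + 1 = p - 1 by omega]
    exact ZMod.pow_card_sub_one_eq_one hS1
  have htb : (t : ZMod p) = -((s : ZMod p) + 1) := by
    rw [hk]
    push_cast [ZMod.natCast_self]
    ring
  have key : ((2 * t * (t + 1) * (t * fermatQuotient p t - (t + 1) * fermatQuotient p (t + 1)) : ℤ) : ZMod p)
      = ((2 * s * (s + 1) * (s * fermatQuotient p s - (s + 1) * fermatQuotient p (s + 1)) : ℤ) : ZMod p) := by
    push_cast
    rw [hQt, hQt1, htb]
    linear_combination (2 * (s : ZMod p) * ((s : ZMod p) + 1) * k0) * e2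
      - (2 * (s : ZMod p) * ((s : ZMod p) + 1) * k0) * e1
  have key' : (2 * t * (t + 1) * (t * fermatQuotient p t - (t + 1) * fermatQuotient p (t + 1))) % (p : ℤ)
      = (2 * s * (s + 1) * (s * fermatQuotient p s - (s + 1) * fermatQuotient p (s + 1))) % (p : ℤ) :=
    (ZMod.intCast_eq_intCast_iff _ _ _).1 key
  unfold theta
  rw [legendreSym.mod, key']
  exact (legendreSym.mod p _).symm
end

section
/- For a prime p and integer u with gcd(u, p) = 1, (u + p)·q_p(u + p) ≡ u·q_p(u) - 1 (mod p). -/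
lemma binom_aux (a b : ℤ) (n : ℕ) :
    (b ^ 2 : ℤ) ∣ (a + b) ^ (n + 1) - (a ^ (n + 1) + (n + 1) * a ^ n * b) := by
  induction n with
  | zero => exact ⟨0, by push_cast; ring⟩
  | succ n ih =>
    obtain ⟨c, hc⟩ := ih
    refine ⟨c * (a + b) + (n + 1) * a ^ n, ?_⟩
    push_cast at hc ⊢
    linear_combination (a + b) * hc

theorem mul_fermatQuotient_add_self (p : ℕ) (hp : p.Prime) (u : ℤ)
    (h : Int.gcd u (p : ℤ) = 1) :
    (u + p) * fermatQuotient p (u + p) ≡ u * fermatQuotient p u - 1 [ZMOD (p : ℤ)] := by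
  have hp2 : 2 ≤ p := hp.two_le
  have hpz : (p : ℤ) ≠ 0 := by exact_mod_cast hp.pos.ne'
  have hcop : IsCoprime u (p : ℤ) := Int.isCoprime_iff_gcd_eq_one.mpr h
  have hflt : u ^ (p - 1) ≡ 1 [ZMOD (p : ℤ)] := Int.ModEq.pow_card_sub_one_eq_one hp hcop
  have hmem : u + (p : ℤ) ≡ u [ZMOD (p : ℤ)] := Int.modEq_iff_dvd.mpr ⟨-1, by ring⟩
  -- write p - 1 = (p - 2) + 1
  have hn : p - 1 = (p - 2) + 1 := by omega
  have hn2 : (p - 2) + 1 + 1 = p := by omega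
  -- the binomial congruence mod p^2
  obtain ⟨c, hc⟩ := binom_aux u (p : ℤ) (p - 2)
  rw [← hn] at hc
  -- hc : (u+p)^(p-1) - (u^(p-1) + ((p-2)+1) * u^(p-2) * p) = p^2 * c
  have hB : (p : ℤ) ∣ u ^ (p - 1) - 1 := by
    have := Int.ModEq.dvd hflt
    obtain ⟨e, he⟩ := this
    exact ⟨-e, by linarith⟩
  obtain ⟨q, hq⟩ := hB
  -- A = (u+p)^(p-1) - 1 = p * (q + ((p-2)+1)*u^(p-2) + p*c)
  have hA : (u + (p:ℤ)) ^ (p - 1) - 1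
      = (p : ℤ) * (q + (((p:ℤ) - 2) + 1) * u ^ (p - 2) + (p : ℤ) * c) := by
    have h1 : (((p - 2 : ℕ)) : ℤ) = (p : ℤ) - 2 := by
      push_cast [Nat.cast_sub hp2]; ring
    rw [h1] at hc
    linarith [hc, hq]
  -- compute the two quotients
  have hq' : ((u + (p:ℤ)) ^ (p - 1) - 1) / (p : ℤ)
      = q + (((p:ℤ) - 2) + 1) * u ^ (p - 2) + (p : ℤ) * c := by
    rw [hA, Int.mul_ediv_cancel_left _ hpz]
  have hqeq : (u ^ (p - 1) - 1) / (p : ℤ) = q := by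
    rw [hq, Int.mul_ediv_cancel_left _ hpz]
  -- unfold fermatQuotient
  unfold fermatQuotient
  rw [hq', hqeq]
  have hmod1 : (q + (((p:ℤ) - 2) + 1) * u ^ (p - 2) + (p : ℤ) * c) % (p : ℤ)
      ≡ q + (((p:ℤ) - 2) + 1) * u ^ (p - 2) + (p : ℤ) * c [ZMOD (p : ℤ)] :=
    Int.emod_emod_of_dvd _ (dvd_refl _)
  have hmod2 : q % (p : ℤ) ≡ q [ZMOD (p : ℤ)] := Int.emod_emod_of_dvd _ (dvd_refl _)
  have hupow : u * u ^ (p - 2) = u ^ (p - 1) := by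
    rw [hn, pow_succ]; ring
  calc (u + (p:ℤ)) * ((q + (((p:ℤ) - 2) + 1) * u ^ (p - 2) + (p : ℤ) * c) % (p : ℤ))
      ≡ u * (q + (((p:ℤ) - 2) + 1) * u ^ (p - 2) + (p : ℤ) * c) [ZMOD (p : ℤ)] :=
        hmem.mul hmod1
    _ ≡ u * (q + (((0:ℤ) - 2) + 1) * u ^ (p - 2) + 0 * c) [ZMOD (p : ℤ)] := by
        have hp0 : (p : ℤ) ≡ 0 [ZMOD (p : ℤ)] := Int.modEq_iff_dvd.mpr ⟨-1, by ring⟩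
        exact (Int.ModEq.refl u).mul
          (((Int.ModEq.refl q).add ((((hp0.sub_right 2).add_right 1)).mul
            (Int.ModEq.refl _))).add (hp0.mul (Int.ModEq.refl c)))
    _ = u * q - u ^ (p - 1) := by rw [← hupow]; ring
    _ ≡ u * q - 1 [ZMOD (p : ℤ)] := (Int.ModEq.refl _).sub hflt
    _ ≡ u * (q % (p:ℤ)) - 1 [ZMOD (p : ℤ)] :=
        (((Int.ModEq.refl u).mul hmod2.symm).sub (Int.ModEq.refl 1))
end

section
/- Let p ≥ 11 be prime with p ≡ 1 (mod 3), and let H be the group of permutations of S_p = {1,...,p-2} generated by F (s ↦ -1-s mod p) and G (s ↦ s^{-1} mod p). Then the action of H on S_p has exactly (p+5)/6 orbits: the orbit {1, (p-1)/2, p-2} of size 3, one orbit of size 2 consisting of the two roots of x²+x+1 ≡ 0 mod p, and (p-7)/6 orbits of size 6. -/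
open MulAction

section Aux
variable {p : ℕ} [Fact p.Prime]

private lemma zne (n : ℕ) (hn : 0 < n) (h : n < p) : (n : ZMod p) ≠ 0 := by
  rw [Ne, ZMod.natCast_eq_zero_iff]
  intro hd
  have := Nat.le_of_dvd hn hd
  omega

variable (f g : Equiv.Perm {x : ZMod p // x ≠ 0 ∧ x ≠ -1})
variable (hf : ∀ s, ((f s : ZMod p)) = -1 - (s : ZMod p))
variable (hg : ∀ s, ((g s : ZMod p)) = (s : ZMod p)⁻¹)

set_option linter.unusedSectionVars false
include hf hg

private lemma ffid : ∀ x, f (f x) = x := by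
  intro x; apply Subtype.ext; rw [hf, hf]; ring

private lemma ggid : ∀ x, g (g x) = x := by
  intro x; apply Subtype.ext; rw [hg, hg, inv_inv]

private lemma keyid : ∀ x, f (g (f x)) = g (f (g x)) := by
  intro x
  obtain ⟨ha, ha1⟩ := x.2
  have ha1' : (x : ZMod p) + 1 ≠ 0 := fun h => ha1 (by linear_combination h)
  apply Subtype.ext
  rw [hf, hg, hf, hg, hf, hg]
  have h2 : -1 - (x : ZMod p) ≠ 0 := fun h => ha1' (by linear_combination -h)
  have h3 : -1 - (x : ZMod p)⁻¹ ≠ 0 := by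
    intro h
    have := congrArg (· * (x : ZMod p)) h
    simp only [sub_mul, neg_mul, one_mul, inv_mul_cancel₀ ha, zero_mul] at this
    exact ha1' (by linear_combination -this)
  apply eq_inv_of_mul_eq_one_left
  field_simp
  ring

variable (H : Subgroup (Equiv.Perm {x : ZMod p // x ≠ 0 ∧ x ≠ -1}))
variable (hH : H = Subgroup.closure {f, g})

include hH

private lemma orbit_eq (s : {x : ZMod p // x ≠ 0 ∧ x ≠ -1}) :
    orbit H s = ({s, g s, f s, f (g s), g (f s), g (f (g s))} :
      Set {x : ZMod p // x ≠ 0 ∧ x ≠ -1}) := by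
  set T : Set {x : ZMod p // x ≠ 0 ∧ x ≠ -1} :=
    {s, g s, f s, f (g s), g (f s), g (f (g s))} with hT
  have memT : ∀ x, x ∈ T ↔ (x = s ∨ x = g s ∨ x = f s ∨ x = f (g s) ∨ x = g (f s)
      ∨ x = g (f (g s))) := by
    intro x
    simp [hT, Set.mem_insert_iff]
  have mapsf : ∀ x ∈ T, f x ∈ T := by
    intro x hx
    rcases (memT x).1 hx with h|h|h|h|h|h <;> subst h <;> rw [memT]
    · tauto
    · tauto
    · rw [ffid f g hf hg]; tauto
    · rw [ffid f g hf hg]; tauto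
    · rw [keyid f g hf hg]; tauto
    · rw [show g (f (g s)) = f (g (f s)) from (keyid f g hf hg s).symm, ffid f g hf hg]; tauto
  have mapsg : ∀ x ∈ T, g x ∈ T := by
    intro x hx
    rcases (memT x).1 hx with h|h|h|h|h|h <;> subst h <;> rw [memT]
    · tauto
    · rw [ggid f g hf hg]; tauto
    · tauto
    · tauto
    · rw [ggid f g hf hg]; tauto
    · rw [ggid f g hf hg]; tauto
  have stepf : ∀ x, x ∈ T ↔ f x ∈ T := by
    intro x
    refine ⟨mapsf x, fun h => ?_⟩
    have := mapsf _ h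
    rwa [ffid f g hf hg] at this
  have stepg : ∀ x, x ∈ T ↔ g x ∈ T := by
    intro x
    refine ⟨mapsg x, fun h => ?_⟩
    have := mapsg _ h
    rwa [ggid f g hf hg] at this
  apply subset_antisymm
  · rintro x ⟨⟨h, hh⟩, rfl⟩
    rw [hH] at hh
    have main : ∀ (w : Equiv.Perm {x : ZMod p // x ≠ 0 ∧ x ≠ -1}),
        w ∈ Subgroup.closure {f, g} → ∀ x, x ∈ T ↔ w x ∈ T := by
      intro w hw
      induction hw using Subgroup.closure_induction with
      | mem w hw =>
        rcases hw with h|h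
        · subst h; exact stepf
        · subst h; exact stepg
      | one => simp
      | mul a b _ _ ha hb =>
        intro x
        rw [Equiv.Perm.mul_apply]
        exact (hb x).trans (ha (b x))
      | inv a _ ha =>
        intro x
        have := ha (a⁻¹ x)
        simp only [Equiv.Perm.coe_inv, Equiv.apply_symm_apply] at this
        exact this.symm
    have hs : s ∈ T := by rw [memT]; tauto
    exact (main h hh s).1 hs
  · intro x hx
    have hfH : f ∈ H := by rw [hH]; exact Subgroup.subset_closure (by simp)
    have hgH : g ∈ H := by rw [hH]; exact Subgroup.subset_closure (by simp)
    rcases (memT x).1 hx with h|h|h|h|h|h <;> rw [h]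
    · exact mem_orbit_self s
    · exact ⟨⟨g, hgH⟩, rfl⟩
    · exact ⟨⟨f, hfH⟩, rfl⟩
    · exact ⟨⟨f * g, mul_mem hfH hgH⟩, rfl⟩
    · exact ⟨⟨g * f, mul_mem hgH hfH⟩, rfl⟩
    · exact ⟨⟨g * f * g, mul_mem (mul_mem hgH hfH) hgH⟩, rfl⟩

private lemma orbit3 (hp11 : 11 ≤ p) (s : {x : ZMod p // x ≠ 0 ∧ x ≠ -1})
    (h1 : (s : ZMod p) = 1) :
    orbit H s = {x : {x : ZMod p // x ≠ 0 ∧ x ≠ -1} |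
        (x : ZMod p) = 1 ∨ (x : ZMod p) = -2⁻¹ ∨ (x : ZMod p) = -2} ∧
    Nat.card (orbit H s) = 3 := by
  have h2 : (2 : ZMod p) ≠ 0 := by
    have := zne (p := p) 2 (by norm_num) (by omega); simpa using this
  have h3 : (3 : ZMod p) ≠ 0 := by
    have := zne (p := p) 3 (by norm_num) (by omega); simpa using this
  have hgs : g s = s := Subtype.ext (by rw [hg, h1, inv_one])
  have hfsv : ((f s : ZMod p)) = -2 := by rw [hf, h1]; ring
  have hgfsv : ((g (f s) : ZMod p)) = -2⁻¹ := by rw [hg, hfsv, inv_neg]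
  have hE := orbit_eq f g hf hg H hH s
  rw [hgs] at hE
  have hE2 : orbit H s = ({s, f s, g (f s)} : Set _) := by
    rw [hE]; ext x
    simp only [Set.mem_insert_iff, Set.mem_singleton_iff]; tauto
  -- distinctness of the three values
  have d12 : (s : ZMod p) ≠ ((f s : ZMod p)) := by
    rw [h1, hfsv]; intro h; exact h3 (by linear_combination h)
  have d13 : (s : ZMod p) ≠ ((g (f s) : ZMod p)) := by
    rw [h1, hgfsv]; intro h
    have h4 : (2 : ZMod p)⁻¹ = -1 := by linear_combination h
    have h6 : (-1 : ZMod p) * 2 = 1 := by rw [← h4]; exact inv_mul_cancel₀ h2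
    exact h3 (by linear_combination -h6)
  have d23 : ((f s : ZMod p)) ≠ ((g (f s) : ZMod p)) := by
    rw [hfsv, hgfsv]; intro h
    have h4 : (2 : ZMod p)⁻¹ = 2 := by linear_combination h
    have h6 : (2 : ZMod p) * 2 = 1 := by nth_rewrite 1 [← h4]; exact inv_mul_cancel₀ h2
    exact h3 (by linear_combination h6)
  have n12 : s ≠ f s := fun hh => d12 (congrArg Subtype.val hh)
  have n13 : s ≠ g (f s) := fun hh => d13 (congrArg Subtype.val hh)
  have n23 : f s ≠ g (f s) := fun hh => d23 (congrArg Subtype.val hh)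
  constructor
  · rw [hE2]; ext x
    simp only [Set.mem_insert_iff, Set.mem_singleton_iff, Set.mem_setOf_eq]
    constructor
    · rintro (rfl|rfl|rfl)
      · exact Or.inl h1
      · exact Or.inr (Or.inr hfsv)
      · exact Or.inr (Or.inl hgfsv)
    · rintro (hv|hv|hv)
      · exact Or.inl (Subtype.ext (hv.trans h1.symm))
      · exact Or.inr (Or.inr (Subtype.ext (hv.trans hgfsv.symm)))
      · exact Or.inr (Or.inl (Subtype.ext (hv.trans hfsv.symm)))
  · rw [hE2, Nat.card_coe_set_eq,
      Set.ncard_insert_of_notMem (by simp [n12, n13]),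
      Set.ncard_pair n23]

private lemma orbit2 (hp11 : 11 ≤ p) (s : {x : ZMod p // x ≠ 0 ∧ x ≠ -1})
    (hq : (s : ZMod p) ^ 2 + (s : ZMod p) + 1 = 0) :
    orbit H s = {x : {x : ZMod p // x ≠ 0 ∧ x ≠ -1} |
        (x : ZMod p) ^ 2 + (x : ZMod p) + 1 = 0} ∧
    Nat.card (orbit H s) = 2 := by
  have h3 : (3 : ZMod p) ≠ 0 := by
    have := zne (p := p) 3 (by norm_num) (by omega); simpa using this
  have hginv : ((s : ZMod p))⁻¹ = -1 - (s : ZMod p) :=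
    inv_eq_of_mul_eq_one_right (by linear_combination -hq)
  have e2 : g s = f s := Subtype.ext (by rw [hg, hf, hginv])
  have e4 : f (g s) = s := by rw [e2, ffid f g hf hg]
  have e5 : g (f s) = s := by rw [← e2, ggid f g hf hg]
  have e6 : g (f (g s)) = f s := by rw [e4, e2]
  have hE := orbit_eq f g hf hg H hH s
  rw [e6, e5, e4, e2] at hE
  have hE2 : orbit H s = ({s, f s} : Set _) := by
    rw [hE]; ext x
    simp only [Set.mem_insert_iff, Set.mem_singleton_iff]; tauto
  have hfsv : ((f s : ZMod p)) = -1 - (s : ZMod p) := hf s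
  have d12 : (s : ZMod p) ≠ ((f s : ZMod p)) := by
    rw [hfsv]; intro h
    have h'' : 2 * (s : ZMod p) + 1 = 0 := by linear_combination h
    exact h3 (by linear_combination 4 * hq - (2 * (s : ZMod p) + 1) * h'')
  have n12 : s ≠ f s := fun hh => d12 (congrArg Subtype.val hh)
  constructor
  · rw [hE2]; ext x
    simp only [Set.mem_insert_iff, Set.mem_singleton_iff, Set.mem_setOf_eq]
    constructor
    · rintro (rfl|rfl)
      · exact hq
      · rw [hfsv]; linear_combination hq
    · intro hx
      have hfac : ((x : ZMod p) - (s : ZMod p)) *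
          ((x : ZMod p) - (-1 - (s : ZMod p))) = 0 := by linear_combination hx - hq
      rcases mul_eq_zero.mp hfac with h'|h'
      · exact Or.inl (Subtype.ext (by linear_combination h'))
      · exact Or.inr (Subtype.ext (by rw [hfsv]; linear_combination h'))
  · rw [hE2, Nat.card_coe_set_eq, Set.ncard_pair n12]

set_option maxHeartbeats 1000000 in
private lemma orbit6 (s : {x : ZMod p // x ≠ 0 ∧ x ≠ -1})
    (k1 : (s : ZMod p) ≠ 1) (k2 : (s : ZMod p) ≠ -2)
    (k3 : 2 * (s : ZMod p) + 1 ≠ 0)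
    (kq : (s : ZMod p) ^ 2 + (s : ZMod p) + 1 ≠ 0) :
    Nat.card (orbit H s) = 6 := by
  obtain ⟨ha, ha1⟩ := s.2
  set a : ZMod p := (s : ZMod p) with haa
  have ha1' : a + 1 ≠ 0 := fun h => ha1 (by linear_combination h)
  set b : ZMod p := a⁻¹ with hbb
  have hb : a * b = 1 := mul_inv_cancel₀ ha
  have hbne : b ≠ 0 := inv_ne_zero ha
  have h5ne : -1 - a ≠ 0 := fun h => ha1' (by linear_combination -h)
  have h6ne : -1 - b ≠ 0 := by
    intro h
    have hb0 : b = -1 := by linear_combination -h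
    rw [hb0] at hb
    exact ha1 (by linear_combination -hb)
  set c : ZMod p := (-1 - a)⁻¹ with hcc
  set d : ZMod p := (-1 - b)⁻¹ with hdd
  have hc : (-1 - a) * c = 1 := mul_inv_cancel₀ h5ne
  have hd : (-1 - b) * d = 1 := mul_inv_cancel₀ h6ne
  have hcne : c ≠ 0 := right_ne_zero_of_mul_eq_one hc
  -- values of the six elements
  have v2 : ((g s : ZMod p)) = b := hg s
  have v3 : ((f s : ZMod p)) = -1 - a := hf s
  have v4 : ((f (g s) : ZMod p)) = -1 - b := by rw [hf, v2]
  have v5 : ((g (f s) : ZMod p)) = c := by rw [hg, v3]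
  have v6 : ((g (f (g s)) : ZMod p)) = d := by rw [hg, v4]
  -- helper for factored contradictions
  have fac1 : ¬ (a = b) := by
    intro h
    have hfac : (a - 1) * (a + 1) = 0 := by linear_combination a * h + hb
    rcases mul_eq_zero.mp hfac with h'|h'
    · exact k1 (by linear_combination h')
    · exact ha1 (by linear_combination h')
  -- the 15 distinctness facts on values
  have d12 : a ≠ b := fac1
  have d13 : a ≠ -1 - a := fun h => k3 (by linear_combination h)
  have d14 : a ≠ -1 - b := fun h => kq (by linear_combination a * h - hb)
  have d15 : a ≠ c := fun h => kq (by linear_combination (1 + a) * h - hc)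
  have d16 : a ≠ d := fun h => k2 (by linear_combination (1 + b) * h - hd - hb)
  have d23 : b ≠ -1 - a := fun h => kq (by linear_combination a * h - hb)
  have d24 : b ≠ -1 - b := fun h => k2 (by linear_combination a * h - 2 * hb)
  have d25 : b ≠ c := by
    intro h
    have hfac : b * (2 * a + 1) = 0 := by linear_combination hb - (-1 - a) * h - hc
    rcases mul_eq_zero.mp hfac with h'|h'
    · exact hbne h'
    · exact k3 h'
  have d26 : b ≠ d := by
    intro h
    have hb2 : b ^ 2 + b + 1 = 0 := by linear_combination -hd - (-1 - b) * h
    exact kq (by linear_combination a ^ 2 * hb2 - (a * b + 1) * hb - a * hb)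
  have d34 : -1 - a ≠ -1 - b := fun h => fac1 (by linear_combination -h)
  have d35 : -1 - a ≠ c := by
    intro h
    have hfac : a * (a + 2) = 0 := by linear_combination hc + (-1 - a) * h
    rcases mul_eq_zero.mp hfac with h'|h'
    · exact ha h'
    · exact k2 (by linear_combination h')
  have d36 : -1 - a ≠ d := fun h =>
    kq (by linear_combination a * hd + a * (-1 - b) * h - (1 + a) * hb)
  have d45 : -1 - b ≠ c := fun h =>
    kq (by linear_combination a * hc + a * (-1 - a) * h - (1 + a) * hb)
  have d46 : -1 - b ≠ d := by
    intro h
    have hfac : b * (b + 2) = 0 := by linear_combination hd + (-1 - b) * h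
    rcases mul_eq_zero.mp hfac with h'|h'
    · exact hbne h'
    · exact k3 (by linear_combination a * h' - hb)
  have d56 : c ≠ d := by
    intro h
    have hfac : (b - a) * c = 0 := by linear_combination hc - hd - (-1 - b) * h
    rcases mul_eq_zero.mp hfac with h'|h'
    · exact fac1 (by linear_combination -h')
    · exact hcne h'
  -- lift to subtype distinctness
  have nv : ∀ x y : {x : ZMod p // x ≠ 0 ∧ x ≠ -1},
      (x : ZMod p) ≠ (y : ZMod p) → x ≠ y :=
    fun x y h hxy => h (congrArg Subtype.val hxy)
  have n12 := nv _ _ (v2 ▸ d12)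
  have n13 := nv s (f s) (by rw [v3]; exact d13)
  have n14 := nv s (f (g s)) (by rw [v4]; exact d14)
  have n15 := nv s (g (f s)) (by rw [v5]; exact d15)
  have n16 := nv s (g (f (g s))) (by rw [v6]; exact d16)
  have n23 := nv (g s) (f s) (by rw [v2, v3]; exact d23)
  have n24 := nv (g s) (f (g s)) (by rw [v2, v4]; exact d24)
  have n25 := nv (g s) (g (f s)) (by rw [v2, v5]; exact d25)
  have n26 := nv (g s) (g (f (g s))) (by rw [v2, v6]; exact d26)
  have n34 := nv (f s) (f (g s)) (by rw [v3, v4]; exact d34)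
  have n35 := nv (f s) (g (f s)) (by rw [v3, v5]; exact d35)
  have n36 := nv (f s) (g (f (g s))) (by rw [v3, v6]; exact d36)
  have n45 := nv (f (g s)) (g (f s)) (by rw [v4, v5]; exact d45)
  have n46 := nv (f (g s)) (g (f (g s))) (by rw [v4, v6]; exact d46)
  have n56 := nv (g (f s)) (g (f (g s))) (by rw [v5, v6]; exact d56)
  rw [orbit_eq f g hf hg H hH s, Nat.card_coe_set_eq,
    Set.ncard_insert_of_notMem (by simp [n12, n13, n14, n15, n16]),
    Set.ncard_insert_of_notMem (by simp [n23, n24, n25, n26]),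
    Set.ncard_insert_of_notMem (by simp [n34, n35, n36]),
    Set.ncard_insert_of_notMem (by simp [n45, n46]),
    Set.ncard_pair n56]

end Aux

set_option maxHeartbeats 1000000 in
theorem orbit_count_one_mod_three (p : ℕ) [Fact p.Prime] (hp11 : 11 ≤ p)
    (h3 : p % 3 = 1)
    (f g : Equiv.Perm {x : ZMod p // x ≠ 0 ∧ x ≠ -1})
    (hf : ∀ s, ((f s : ZMod p)) = -1 - (s : ZMod p))
    (hg : ∀ s, ((g s : ZMod p)) = (s : ZMod p)⁻¹)
    (H : Subgroup (Equiv.Perm {x : ZMod p // x ≠ 0 ∧ x ≠ -1}))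
    (hH : H = Subgroup.closure {f, g}) :
    Nat.card (MulAction.orbitRel.Quotient H {x : ZMod p // x ≠ 0 ∧ x ≠ -1}) = (p + 5) / 6 ∧
    (∀ s : {x : ZMod p // x ≠ 0 ∧ x ≠ -1}, (s : ZMod p) = 1 →
      MulAction.orbit H s =
        {x : {x : ZMod p // x ≠ 0 ∧ x ≠ -1} |
          (x : ZMod p) = 1 ∨ (x : ZMod p) = -2⁻¹ ∨ (x : ZMod p) = -2} ∧
      Nat.card (MulAction.orbit H s) = 3) ∧
    (∀ s : {x : ZMod p // x ≠ 0 ∧ x ≠ -1}, (s : ZMod p) ^ 2 + (s : ZMod p) + 1 = 0 →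
      MulAction.orbit H s =
        {x : {x : ZMod p // x ≠ 0 ∧ x ≠ -1} | (x : ZMod p) ^ 2 + (x : ZMod p) + 1 = 0} ∧
      Nat.card (MulAction.orbit H s) = 2) ∧
    Nat.card {o : MulAction.orbitRel.Quotient H {x : ZMod p // x ≠ 0 ∧ x ≠ -1} //
      Nat.card o.orbit = 6} = (p - 7) / 6 := by
  classical
  have hprime : p.Prime := Fact.out
  have h2ne : (2 : ZMod p) ≠ 0 := by
    have := zne (p := p) 2 (by norm_num) (by omega); simpa using this
  have h3ne : (3 : ZMod p) ≠ 0 := by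
    have := zne (p := p) 3 (by norm_num) (by omega); simpa using this
  -- the element 1
  have h1ne1 : (1 : ZMod p) ≠ -1 := fun h => h2ne (by linear_combination h)
  set s₁ : {x : ZMod p // x ≠ 0 ∧ x ≠ -1} := ⟨1, one_ne_zero, h1ne1⟩ with hs₁
  -- a root of x² + x + 1
  have hdvd : (3 : ℕ) ∣ Fintype.card (ZMod p)ˣ := by rw [ZMod.card_units]; omega
  obtain ⟨u, hu⟩ := exists_prime_orderOf_dvd_card 3 hdvd
  have hu3 : u ^ 3 = 1 := by rw [← hu]; exact pow_orderOf_eq_one u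
  have hune : u ≠ 1 := by intro h; rw [h, orderOf_one] at hu; omega
  have ha3 : ((u : ZMod p)) ^ 3 = 1 := by rw [← Units.val_pow_eq_pow_val, hu3, Units.val_one]
  have hane : ((u : ZMod p)) ≠ 1 := fun h => hune (Units.ext h)
  have hq : ((u : ZMod p)) ^ 2 + (u : ZMod p) + 1 = 0 := by
    have hfac : (((u : ZMod p)) - 1) * (((u : ZMod p)) ^ 2 + (u : ZMod p) + 1) = 0 := by
      linear_combination ha3
    rcases mul_eq_zero.mp hfac with h'|h'
    · exact absurd (by linear_combination h') hane
    · exact h'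
  have haneg : ((u : ZMod p)) ≠ -1 := by
    intro h; rw [h] at hq
    exact one_ne_zero (by linear_combination hq)
  set sω : {x : ZMod p // x ≠ 0 ∧ x ≠ -1} := ⟨(u : ZMod p), u.ne_zero, haneg⟩ with hsω
  have hsωq : ((sω : ZMod p)) ^ 2 + (sω : ZMod p) + 1 = 0 := hq
  -- orbit facts
  have O3 := fun (s : {x : ZMod p // x ≠ 0 ∧ x ≠ -1}) (h : (s : ZMod p) = 1) =>
    orbit3 f g hf hg H hH hp11 s h
  have O2 := fun (s : {x : ZMod p // x ≠ 0 ∧ x ≠ -1})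
    (h : (s : ZMod p) ^ 2 + (s : ZMod p) + 1 = 0) => orbit2 f g hf hg H hH hp11 s h
  have h1card : Nat.card (MulAction.orbit H s₁) = 3 := (O3 s₁ rfl).2
  have h2card : Nat.card (MulAction.orbit H sω) = 2 := (O2 sω hsωq).2
  -- trichotomy
  have tri : ∀ x : {x : ZMod p // x ≠ 0 ∧ x ≠ -1},
      (MulAction.orbit H x = MulAction.orbit H s₁ ∧ Nat.card (MulAction.orbit H x) = 3) ∨
      (MulAction.orbit H x = MulAction.orbit H sω ∧ Nat.card (MulAction.orbit H x) = 2) ∨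
      Nat.card (MulAction.orbit H x) = 6 := by
    intro x
    by_cases hx1 : (x : ZMod p) = 1 ∨ (x : ZMod p) = -2 ∨ (x : ZMod p) = -2⁻¹
    · left
      have hx_mem : x ∈ MulAction.orbit H s₁ := by
        rw [(O3 s₁ rfl).1]
        simp only [Set.mem_setOf_eq]
        tauto
      obtain ⟨w, rfl⟩ := hx_mem
      have he : MulAction.orbit H (w • s₁) = MulAction.orbit H s₁ := MulAction.orbit_smul w s₁
      exact ⟨he, by rw [he]; exact h1card⟩
    · by_cases hxq : (x : ZMod p) ^ 2 + (x : ZMod p) + 1 = 0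
      · right; left
        exact ⟨(O2 x hxq).1.trans (O2 sω hsωq).1.symm, (O2 x hxq).2⟩
      · right; right
        push_neg at hx1
        obtain ⟨k1, k2, k3'⟩ := hx1
        have k3 : 2 * (x : ZMod p) + 1 ≠ 0 := by
          intro h
          apply k3'
          have h2x : 2 * (x : ZMod p) = -1 := by linear_combination h
          calc (x : ZMod p) = 2⁻¹ * (2 * (x : ZMod p)) := by
                rw [← mul_assoc, inv_mul_cancel₀ h2ne, one_mul]
          _ = -2⁻¹ := by rw [h2x]; ring
        exact orbit6 f g hf hg H hH x k1 k2 k3 hxq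
  -- quotient setup
  set Ω := MulAction.orbitRel.Quotient H {x : ZMod p // x ≠ 0 ∧ x ≠ -1} with hΩ
  haveI fΩ : Fintype Ω := Fintype.ofFinite _
  have class_eq : ∀ x y : {x : ZMod p // x ≠ 0 ∧ x ≠ -1},
      MulAction.orbit H x = MulAction.orbit H y →
      (Quotient.mk'' x : Ω) = Quotient.mk'' y := by
    intro x y h
    apply Quotient.sound'
    exact (MulAction.orbitRel_apply).mpr (h ▸ MulAction.mem_orbit_self x)
  set ω₁ : Ω := Quotient.mk'' s₁ with hω₁
  set ω₂ : Ω := Quotient.mk'' sω with hω₂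
  have hc1 : Nat.card ω₁.orbit = 3 := by
    rw [hω₁, MulAction.orbitRel.Quotient.orbit_mk]; exact h1card
  have hc2 : Nat.card ω₂.orbit = 2 := by
    rw [hω₂, MulAction.orbitRel.Quotient.orbit_mk]; exact h2card
  have hω12 : ω₁ ≠ ω₂ := by
    intro h; rw [h, hc2] at hc1; omega
  have hout : ∀ o : Ω, o.orbit = MulAction.orbit H (Quotient.out o) := fun o =>
    MulAction.orbitRel.Quotient.orbit_eq_orbit_out o Quotient.out_eq'
  have key6 : ∀ o : Ω, o ≠ ω₁ → o ≠ ω₂ → Nat.card o.orbit = 6 := by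
    intro o ho1 ho2
    rcases tri (Quotient.out o) with ⟨he, _⟩|⟨he, _⟩|hc
    · exact absurd (by rw [← Quotient.out_eq' o]; exact class_eq _ _ he) ho1
    · exact absurd (by rw [← Quotient.out_eq' o]; exact class_eq _ _ he) ho2
    · rw [hout o]; exact hc
  have keyconv : ∀ o : Ω, Nat.card o.orbit = 6 ↔ (o ≠ ω₁ ∧ o ≠ ω₂) := by
    intro o
    constructor
    · intro h6
      constructor
      · intro h; rw [h, hc1] at h6; omega
      · intro h; rw [h, hc2] at h6; omega
    · intro ⟨h1, h2⟩; exact key6 o h1 h2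
  -- total count
  have hcardS : Nat.card {x : ZMod p // x ≠ 0 ∧ x ≠ -1} = p - 2 := by
    have hset : {x : ZMod p | x ≠ 0 ∧ x ≠ -1} = ({0, -1} : Set (ZMod p))ᶜ := by
      ext x; simp [not_or]
    have h01 : (0 : ZMod p) ≠ -1 := fun h => one_ne_zero (by linear_combination h)
    have := Set.ncard_add_ncard_compl ({0, -1} : Set (ZMod p))
    rw [Set.ncard_pair h01, Nat.card_zmod] at this
    have hc : Nat.card {x : ZMod p // x ≠ 0 ∧ x ≠ -1} =
        Set.ncard {x : ZMod p | x ≠ 0 ∧ x ≠ -1} := Nat.card_coe_set_eq _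
    rw [hc, hset]
    omega
  haveI : ∀ o : Ω, Fintype (MulAction.orbit H (Quotient.out o)) := fun o => Fintype.ofFinite _
  have hsum : ∑ o : Ω, Nat.card (MulAction.orbit H (Quotient.out o)) = p - 2 := by
    rw [← hcardS, Nat.card_congr (MulAction.selfEquivSigmaOrbits H _),
      Nat.card_eq_fintype_card, Fintype.card_sigma]
    exact Finset.sum_congr rfl fun o _ => Nat.card_eq_fintype_card
  have hsum' : ∑ o : Ω, Nat.card o.orbit = p - 2 := by
    rw [← hsum]
    exact Finset.sum_congr rfl fun o _ => by rw [hout o]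
  -- split the sum
  set R : Finset Ω := (Finset.univ.erase ω₁).erase ω₂ with hR
  have hω₂mem : ω₂ ∈ Finset.univ.erase ω₁ := Finset.mem_erase.mpr ⟨hω12.symm, Finset.mem_univ _⟩
  have hsplit : ∑ o : Ω, Nat.card o.orbit =
      Nat.card ω₁.orbit + (Nat.card ω₂.orbit + ∑ o ∈ R, Nat.card o.orbit) := by
    rw [← Finset.add_sum_erase _ _ (Finset.mem_univ ω₁),
      ← Finset.add_sum_erase _ _ hω₂mem]
  have hRconst : ∑ o ∈ R, Nat.card o.orbit = R.card * 6 := by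
    calc ∑ o ∈ R, Nat.card o.orbit = ∑ _o ∈ R, 6 := Finset.sum_congr rfl fun o ho => by
          have ho2 := (Finset.mem_erase.mp ho).1
          have ho1 := (Finset.mem_erase.mp (Finset.mem_erase.mp ho).2).1
          exact key6 o ho1 ho2
    _ = R.card * 6 := by rw [Finset.sum_const, smul_eq_mul]
  have hN : Fintype.card Ω = R.card + 2 := by
    have h1 : (Finset.univ.erase ω₁).card = Fintype.card Ω - 1 := by
      rw [Finset.card_erase_of_mem (Finset.mem_univ _), Finset.card_univ]
    have h2 : R.card = (Finset.univ.erase ω₁).card - 1 := by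
      rw [hR, Finset.card_erase_of_mem hω₂mem]
    have h3 : 0 < (Finset.univ.erase ω₁).card := Finset.card_pos.mpr ⟨ω₂, hω₂mem⟩
    have h4 : 0 < Fintype.card Ω := Fintype.card_pos_iff.mpr ⟨ω₁⟩
    omega
  have hodd : p % 2 = 1 := Nat.odd_iff.mp (hprime.odd_of_ne_two (by omega))
  have hmain : p - 2 = 3 + (2 + R.card * 6) := by
    rw [← hsum', hsplit, hc1, hc2, hRconst]
  have hRcard : R.card = (p - 7) / 6 := by omega
  refine ⟨?_, fun s h => O3 s h, fun s h => O2 s h, ?_⟩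
  · rw [Nat.card_eq_fintype_card, hN]
    omega
  · rw [Nat.card_eq_fintype_card, Fintype.card_subtype]
    have : Finset.filter (fun o : Ω => Nat.card o.orbit = 6) Finset.univ = R := by
      ext o
      simp only [Finset.mem_filter, Finset.mem_univ, true_and, hR, Finset.mem_erase]
      rw [keyconv o]
      tauto
    rw [this, hRcard]
end

section
/- Let p ≥ 11 be prime with p ≡ 2 (mod 3), and let H be the group of permutations of S_p = {1,...,p-2} generated by F (s ↦ -1-s mod p) and G (s ↦ s^{-1} mod p). Then the action of H on S_p has exactly (p+1)/6 orbits: the orbit {1, (p-1)/2, p-2} of size 3 and (p-5)/6 orbits of size 6. -/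
open MulAction

section Aux
variable {p : ℕ} [Fact p.Prime]

private lemma aux_nz (hp11 : 11 ≤ p) {n : ℕ} (h0 : 0 < n) (hn : n < 11) :
    (n : ZMod p) ≠ 0 := by
  intro h
  rw [ZMod.natCast_eq_zero_iff] at h
  have := Nat.le_of_dvd h0 h
  omega

private lemma aux_two (hp11 : 11 ≤ p) : (2 : ZMod p) ≠ 0 := by
  have := aux_nz (p := p) hp11 (n := 2) (by norm_num) (by norm_num)
  simpa using this

private lemma aux_three (hp11 : 11 ≤ p) : (3 : ZMod p) ≠ 0 := by
  have := aux_nz (p := p) hp11 (n := 3) (by norm_num) (by norm_num)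
  simpa using this

private lemma no_cube (hp11 : 11 ≤ p) (h3 : p % 3 = 2) {x : ZMod p}
    (h : x ^ 2 + x + 1 = 0) : False := by
  have hx1 : x ≠ 1 := by
    rintro rfl
    exact aux_three hp11 (by linear_combination h)
  have hx0 : x ≠ 0 := by rintro rfl; simp at h
  have h3' : x ^ 3 = 1 := by linear_combination (x - 1) * h
  have hord3 : orderOf x ∣ 3 := orderOf_dvd_of_pow_eq_one h3'
  have hordp : orderOf x ∣ p - 1 :=
    orderOf_dvd_of_pow_eq_one (ZMod.pow_card_sub_one_eq_one hx0)
  have hnd : ¬ (3 ∣ p - 1) := by omega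
  have hco : Nat.Coprime 3 (p - 1) :=
    (Nat.Prime.coprime_iff_not_dvd (by norm_num)).mpr hnd
  have : orderOf x ∣ 1 := Nat.dvd_gcd hord3 hordp |>.trans (dvd_of_eq hco)
  exact hx1 (orderOf_eq_one_iff.mp (Nat.eq_one_of_dvd_one this))
end Aux

section Distinct
variable {p : ℕ} [Fact p.Prime]

private lemma ncard_six' (hp11 : 11 ≤ p) (h3 : p % 3 = 2) {a b d k : ZMod p}
    (h1 : a ≠ 1) (hm1 : a ≠ -1) (hm2 : a ≠ -2) (hA4 : 2 * a + 1 ≠ 0)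
    (hb : a * b = 1) (hd : (-1 - a) * d = 1) (hk : (-1 - b) * k = 1) :
    ({a, b, -1 - a, d, -1 - b, k} : Set (ZMod p)).ncard = 6 := by
  have hq : ∀ {x : ZMod p}, x ^ 2 + x + 1 = 0 → False := fun h => no_cube hp11 h3 h
  have h0 : a ≠ 0 := by rintro rfl; simp at hb
  have hbne0 : b ≠ 0 := by rintro rfl; simp at hb
  have hdne0 : d ≠ 0 := by rintro rfl; simp at hd
  have endA1 : a - 1 ≠ 0 := sub_ne_zero.mpr h1
  have endA2 : a + 1 ≠ 0 := by intro h; exact hm1 (by linear_combination h)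
  have endA3 : a + 2 ≠ 0 := by intro h; exact hm2 (by linear_combination h)
  have n01 : a ≠ b := by
    intro h
    rcases mul_eq_zero.mp (show (a - 1) * (a + 1) = 0 by linear_combination a * h + hb) with h' | h'
    exacts [endA1 h', endA2 h']
  have n02 : a ≠ -1 - a := fun h => hA4 (by linear_combination h)
  have n03 : a ≠ d := fun h => hq (show a ^ 2 + a + 1 = 0 by linear_combination (1 + a) * h - hd)
  have n04 : a ≠ -1 - b := fun h => hq (show a ^ 2 + a + 1 = 0 by linear_combination a * h - hb)
  have n05 : a ≠ k := fun h => endA3 (by linear_combination (1 + b) * h - hk - hb)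
  have n12 : b ≠ -1 - a := fun h => hq (show a ^ 2 + a + 1 = 0 by linear_combination a * h - hb)
  have n13 : b ≠ d := by
    intro h
    rcases mul_eq_zero.mp (show (2 * a + 1) * b = 0 by linear_combination hb - hd + (1 + a) * h) with h' | h'
    exacts [hA4 h', hbne0 h']
  have n14 : b ≠ -1 - b := fun h => endA3 (by linear_combination a * h - 2 * hb)
  have n15 : b ≠ k := fun h => hq (show a ^ 2 + a + 1 = 0 by
    linear_combination a ^ 2 * (1 + b) * h - a ^ 2 * hk - (a * b + 1 + a) * hb)
  have n23 : -1 - a ≠ d := by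
    intro h
    rcases mul_eq_zero.mp (show a * (a + 2) = 0 by linear_combination (-1 - a) * h + hd) with h' | h'
    exacts [h0 h', endA3 h']
  have n24 : -1 - a ≠ -1 - b := by
    intro h
    rcases mul_eq_zero.mp (show (a - 1) * (a + 1) = 0 by linear_combination -a * h + hb) with h' | h'
    exacts [endA1 h', endA2 h']
  have n25 : -1 - a ≠ k := fun h => hq (show a ^ 2 + a + 1 = 0 by
    linear_combination -a * (1 + b) * h + a * hk - (1 + a) * hb)
  have n34 : d ≠ -1 - b := fun h => hq (show a ^ 2 + a + 1 = 0 by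
    linear_combination a * (1 + a) * h + a * hd - (1 + a) * hb)
  have n35 : d ≠ k := by
    intro h
    have hab : a = b := by
      rcases mul_eq_zero.mp (show (a - b) * d = 0 by linear_combination -hd + hk - (1 + b) * h) with h' | h'
      · linear_combination h'
      · exact absurd h' hdne0
    rcases mul_eq_zero.mp (show (a - 1) * (a + 1) = 0 by linear_combination a * hab + hb) with h' | h'
    exacts [endA1 h', endA2 h']
  have n45 : -1 - b ≠ k := by
    intro h
    rcases mul_eq_zero.mp (show b * (b + 2) = 0 by linear_combination (-1 - b) * h + hk) with h' | h'
    · exact hbne0 h'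
    · exact hA4 (by linear_combination a * h' - hb)
  have c2 : ({-1 - b, k} : Set (ZMod p)).ncard = 2 := Set.ncard_pair n45
  have c3 : ({d, -1 - b, k} : Set (ZMod p)).ncard = 3 := by
    rw [Set.ncard_insert_of_notMem (by simp [n34, n35]), c2]
  have c4 : ({-1 - a, d, -1 - b, k} : Set (ZMod p)).ncard = 4 := by
    rw [Set.ncard_insert_of_notMem (by simp [n23, n24, n25]), c3]
  have c5 : ({b, -1 - a, d, -1 - b, k} : Set (ZMod p)).ncard = 5 := by
    rw [Set.ncard_insert_of_notMem (by simp [n12, n13, n14, n15]), c4]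
  rw [Set.ncard_insert_of_notMem (by simp [n01, n02, n03, n04, n05]), c5]

private lemma ncard_three (hp11 : 11 ≤ p) :
    ({(1 : ZMod p), -2, -2⁻¹} : Set (ZMod p)).ncard = 3 := by
  have h2 := aux_two (p := p) hp11
  have h3 := aux_three (p := p) hp11
  have e1 : (1 : ZMod p) ≠ -2 := fun h => h3 (by linear_combination h)
  have e2 : (1 : ZMod p) ≠ -2⁻¹ := by
    intro h
    have h' : (-1 : ZMod p) = 2⁻¹ := by linear_combination -h
    have : (-1 : ZMod p) * 2 = 1 := by rw [h']; exact inv_mul_cancel₀ h2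
    exact h3 (by linear_combination -this)
  have e3 : (-2 : ZMod p) ≠ -2⁻¹ := by
    intro h
    have h' : (2 : ZMod p) = 2⁻¹ := neg_inj.mp h
    have : (2 : ZMod p) * 2 = 1 := by nth_rewrite 2 [h']; exact mul_inv_cancel₀ h2
    exact h3 (by linear_combination this)
  rw [Set.ncard_insert_of_notMem (by simp [e1, e2]), Set.ncard_pair e3]
end Distinct

section Orbit
variable {p : ℕ} [Fact p.Prime]
  {f g : Equiv.Perm {x : ZMod p // x ≠ 0 ∧ x ≠ -1}}

private lemma val_f (hf : ∀ s, ((f s : ZMod p)) = -1 - (s : ZMod p))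
    (x : {x : ZMod p // x ≠ 0 ∧ x ≠ -1}) : f (f x) = x := by
  apply Subtype.ext
  rw [hf, hf]; ring

private lemma val_g (hg : ∀ s, ((g s : ZMod p)) = (s : ZMod p)⁻¹)
    (x : {x : ZMod p // x ≠ 0 ∧ x ≠ -1}) : g (g x) = x := by
  apply Subtype.ext
  rw [hg, hg, inv_inv]

private lemma ne_zero_aux (x : {x : ZMod p // x ≠ 0 ∧ x ≠ -1}) :
    (-1 - (x : ZMod p)) ≠ 0 ∧ (-1 - (x : ZMod p)⁻¹) ≠ 0 := by
  constructor
  · intro h; exact x.2.2 (by linear_combination -h)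
  · intro h
    have hinv : (x : ZMod p)⁻¹ = -1 := by linear_combination -h
    have hc := mul_inv_cancel₀ x.2.1
    rw [hinv] at hc
    exact x.2.2 (by linear_combination -hc)

private lemma fgf_eq_gfg (hf : ∀ s, ((f s : ZMod p)) = -1 - (s : ZMod p))
    (hg : ∀ s, ((g s : ZMod p)) = (s : ZMod p)⁻¹)
    (x : {x : ZMod p // x ≠ 0 ∧ x ≠ -1}) : f (g (f x)) = g (f (g x)) := by
  apply Subtype.ext
  rw [hf, hg, hf, hg, hf, hg]
  have h1 := (ne_zero_aux x).1
  have h2 := (ne_zero_aux x).2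
  have h0 := x.2.1
  have hd := mul_inv_cancel₀ h1
  have hk := mul_inv_cancel₀ h2
  have hb := mul_inv_cancel₀ h0
  apply mul_left_cancel₀ h1
  linear_combination -hd - (x : ZMod p) * hk - ((-1 - (x : ZMod p)⁻¹)⁻¹) * hb

private lemma orbit_eq_s14 (hf : ∀ s, ((f s : ZMod p)) = -1 - (s : ZMod p))
    (hg : ∀ s, ((g s : ZMod p)) = (s : ZMod p)⁻¹)
    (H : Subgroup (Equiv.Perm {x : ZMod p // x ≠ 0 ∧ x ≠ -1}))
    (hH : H = Subgroup.closure {f, g}) (s : {x : ZMod p // x ≠ 0 ∧ x ≠ -1}) :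
    MulAction.orbit H s = {s, g s, f s, g (f s), f (g s), g (f (g s))} := by
  have hfH : f ∈ H := hH ▸ Subgroup.subset_closure (by simp)
  have hgH : g ∈ H := hH ▸ Subgroup.subset_closure (by simp)
  set S : Set {x : ZMod p // x ≠ 0 ∧ x ≠ -1} :=
    {s, g s, f s, g (f s), f (g s), g (f (g s))} with hS
  have hmem : ∀ x, x ∈ S ↔ (x = s ∨ x = g s ∨ x = f s ∨ x = g (f s) ∨ x = f (g s) ∨
      x = g (f (g s))) := by
    intro x
    simp [hS, Set.mem_insert_iff]
  have hfS : ∀ x ∈ S, f x ∈ S := by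
    intro x hx
    rcases (hmem x).mp hx with rfl | rfl | rfl | rfl | rfl | rfl <;> rw [hmem]
    · exact Or.inr (Or.inr (Or.inl rfl))
    · exact Or.inr (Or.inr (Or.inr (Or.inr (Or.inl rfl))))
    · exact Or.inl (val_f hf s)
    · exact Or.inr (Or.inr (Or.inr (Or.inr (Or.inr (fgf_eq_gfg hf hg s)))))
    · exact Or.inr (Or.inl (val_f hf (g s)))
    · refine Or.inr (Or.inr (Or.inr (Or.inl ?_)))
      rw [fgf_eq_gfg hf hg (g s), val_g hg s]
  have hgS : ∀ x ∈ S, g x ∈ S := by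
    intro x hx
    rcases (hmem x).mp hx with rfl | rfl | rfl | rfl | rfl | rfl <;> rw [hmem]
    · exact Or.inr (Or.inl rfl)
    · exact Or.inl (val_g hg s)
    · exact Or.inr (Or.inr (Or.inr (Or.inl rfl)))
    · exact Or.inr (Or.inr (Or.inl (val_g hg (f s))))
    · exact Or.inr (Or.inr (Or.inr (Or.inr (Or.inr rfl))))
    · exact Or.inr (Or.inr (Or.inr (Or.inr (Or.inl (val_g hg (f (g s)))))))
  have inv : ∀ σ ∈ Subgroup.closure
      ({f, g} : Set (Equiv.Perm {x : ZMod p // x ≠ 0 ∧ x ≠ -1})),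
      ∀ x, x ∈ S ↔ σ x ∈ S := by
    intro σ hσ
    induction hσ using Subgroup.closure_induction with
    | mem τ hτ =>
      intro x
      rcases (by simpa using hτ : τ = f ∨ τ = g) with rfl | rfl
      · exact ⟨fun h => hfS x h, fun h => by
          have := hfS _ h; rwa [val_f hf] at this⟩
      · exact ⟨fun h => hgS x h, fun h => by
          have := hgS _ h; rwa [val_g hg] at this⟩
    | one => intro x; simp
    | mul τ υ _ _ hτ hυ =>
      intro x
      rw [hυ x, Equiv.Perm.mul_apply]
      exact hτ (υ x)
    | inv τ _ hτ =>
      intro x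
      have := (hτ (τ⁻¹ x)).symm
      rwa [← Equiv.Perm.mul_apply, mul_inv_cancel, Equiv.Perm.one_apply] at this
  ext x
  constructor
  · rintro ⟨σ, rfl⟩
    have hmem' : (σ : Equiv.Perm {x : ZMod p // x ≠ 0 ∧ x ≠ -1}) ∈
        Subgroup.closure ({f, g} : Set _) := by rw [← hH]; exact σ.2
    have := (inv _ hmem' s).mp (by rw [hmem]; exact Or.inl rfl)
    simpa [Subgroup.smul_def, Equiv.Perm.smul_def] using this
  · intro hx
    rcases (hmem x).mp hx with rfl | rfl | rfl | rfl | rfl | rfl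
    · exact MulAction.mem_orbit_self _
    · exact MulAction.mem_orbit_iff.mpr ⟨⟨g, hgH⟩, by
        simp [Subgroup.smul_def, Equiv.Perm.smul_def]⟩
    · exact MulAction.mem_orbit_iff.mpr ⟨⟨f, hfH⟩, by
        simp [Subgroup.smul_def, Equiv.Perm.smul_def]⟩
    · exact MulAction.mem_orbit_iff.mpr ⟨⟨g * f, mul_mem hgH hfH⟩, by
        simp [Subgroup.smul_def, Equiv.Perm.smul_def, Equiv.Perm.mul_apply]⟩
    · exact MulAction.mem_orbit_iff.mpr ⟨⟨f * g, mul_mem hfH hgH⟩, by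
        simp [Subgroup.smul_def, Equiv.Perm.smul_def, Equiv.Perm.mul_apply]⟩
    · exact MulAction.mem_orbit_iff.mpr ⟨⟨g * (f * g), mul_mem hgH (mul_mem hfH hgH)⟩, by
        simp [Subgroup.smul_def, Equiv.Perm.smul_def, Equiv.Perm.mul_apply]⟩
end Orbit

section Card
variable {p : ℕ} [Fact p.Prime] {f g : Equiv.Perm {x : ZMod p // x ≠ 0 ∧ x ≠ -1}}

private lemma card_orbit_six (hp11 : 11 ≤ p) (h3 : p % 3 = 2)
    (hf : ∀ s, ((f s : ZMod p)) = -1 - (s : ZMod p))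
    (hg : ∀ s, ((g s : ZMod p)) = (s : ZMod p)⁻¹)
    (H : Subgroup (Equiv.Perm {x : ZMod p // x ≠ 0 ∧ x ≠ -1}))
    (hH : H = Subgroup.closure {f, g}) (s : {x : ZMod p // x ≠ 0 ∧ x ≠ -1})
    (h1 : (s : ZMod p) ≠ 1) (hm2 : (s : ZMod p) ≠ -2) (hmh : (s : ZMod p) ≠ -2⁻¹) :
    Nat.card (MulAction.orbit H s) = 6 := by
  rw [orbit_eq_s14 hf hg H hH s, Nat.card_coe_set_eq,
    ← Set.ncard_image_of_injective _ (Subtype.val_injective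
      (p := fun x : ZMod p => x ≠ 0 ∧ x ≠ -1))]
  have himg : Subtype.val '' ({s, g s, f s, g (f s), f (g s), g (f (g s))} :
      Set {x : ZMod p // x ≠ 0 ∧ x ≠ -1}) =
      {(s : ZMod p), (s : ZMod p)⁻¹, -1 - (s : ZMod p), (-1 - (s : ZMod p))⁻¹,
       -1 - (s : ZMod p)⁻¹, (-1 - (s : ZMod p)⁻¹)⁻¹} := by
    simp [Set.image_insert_eq, hf, hg]
  rw [himg]
  have hz := ne_zero_aux (p := p) s
  have hA4 : 2 * (s : ZMod p) + 1 ≠ 0 := by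
    intro h
    apply hmh
    have h2 := aux_two (p := p) hp11
    have h2s : (2 : ZMod p) * (s : ZMod p) = -1 := by linear_combination h
    calc (s : ZMod p) = 2⁻¹ * (2 * (s : ZMod p)) := by
          rw [← mul_assoc, inv_mul_cancel₀ h2, one_mul]
      _ = 2⁻¹ * (-1) := by rw [h2s]
      _ = -2⁻¹ := by ring
  exact ncard_six' hp11 h3 h1 s.2.2 hm2 hA4 (mul_inv_cancel₀ s.2.1)
    (mul_inv_cancel₀ hz.1) (mul_inv_cancel₀ hz.2)

private lemma orbit_one (hp11 : 11 ≤ p)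
    (hf : ∀ s, ((f s : ZMod p)) = -1 - (s : ZMod p))
    (hg : ∀ s, ((g s : ZMod p)) = (s : ZMod p)⁻¹)
    (H : Subgroup (Equiv.Perm {x : ZMod p // x ≠ 0 ∧ x ≠ -1}))
    (hH : H = Subgroup.closure {f, g}) (s : {x : ZMod p // x ≠ 0 ∧ x ≠ -1})
    (hs1 : (s : ZMod p) = 1) :
    MulAction.orbit H s = {x : {x : ZMod p // x ≠ 0 ∧ x ≠ -1} |
        (x : ZMod p) = 1 ∨ (x : ZMod p) = -2⁻¹ ∨ (x : ZMod p) = -2} ∧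
    Nat.card (MulAction.orbit H s) = 3 := by
  have v1 : ((g s : {x : ZMod p // x ≠ 0 ∧ x ≠ -1}) : ZMod p) = 1 := by
    rw [hg, hs1, inv_one]
  have v2 : ((f s : {x : ZMod p // x ≠ 0 ∧ x ≠ -1}) : ZMod p) = -2 := by
    rw [hf, hs1]; ring
  have v3 : ((g (f s) : {x : ZMod p // x ≠ 0 ∧ x ≠ -1}) : ZMod p) = -2⁻¹ := by
    rw [hg, v2, inv_neg]
  have v4 : ((f (g s) : {x : ZMod p // x ≠ 0 ∧ x ≠ -1}) : ZMod p) = -2 := by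
    rw [hf, v1]; ring
  have v5 : ((g (f (g s)) : {x : ZMod p // x ≠ 0 ∧ x ≠ -1}) : ZMod p) = -2⁻¹ := by
    rw [hg, v4, inv_neg]
  constructor
  · rw [orbit_eq_s14 hf hg H hH s]
    ext x
    simp only [Set.mem_insert_iff, Set.mem_singleton_iff, Set.mem_setOf_eq,
      Subtype.ext_iff, hs1, v1, v2, v3, v4, v5]
    tauto
  · rw [orbit_eq_s14 hf hg H hH s, Nat.card_coe_set_eq,
      ← Set.ncard_image_of_injective _ (Subtype.val_injective
        (p := fun x : ZMod p => x ≠ 0 ∧ x ≠ -1))]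
    have himg : Subtype.val '' ({s, g s, f s, g (f s), f (g s), g (f (g s))} :
        Set {x : ZMod p // x ≠ 0 ∧ x ≠ -1}) =
        {(1 : ZMod p), -2, -2⁻¹} := by
      simp only [Set.image_insert_eq, Set.image_singleton, hs1, v1, v2, v3, v4, v5]
      ext z
      simp only [Set.mem_insert_iff, Set.mem_singleton_iff]
      tauto
    rw [himg, ncard_three hp11]
end Card

theorem orbit_count_two_mod_three (p : ℕ) [Fact p.Prime] (hp11 : 11 ≤ p)
    (h3 : p % 3 = 2)
    (f g : Equiv.Perm {x : ZMod p // x ≠ 0 ∧ x ≠ -1})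
    (hf : ∀ s, ((f s : ZMod p)) = -1 - (s : ZMod p))
    (hg : ∀ s, ((g s : ZMod p)) = (s : ZMod p)⁻¹)
    (H : Subgroup (Equiv.Perm {x : ZMod p // x ≠ 0 ∧ x ≠ -1}))
    (hH : H = Subgroup.closure {f, g}) :
    Nat.card (MulAction.orbitRel.Quotient H {x : ZMod p // x ≠ 0 ∧ x ≠ -1}) = (p + 1) / 6 ∧
    (∀ s : {x : ZMod p // x ≠ 0 ∧ x ≠ -1}, (s : ZMod p) = 1 →
      MulAction.orbit H s =
        {x : {x : ZMod p // x ≠ 0 ∧ x ≠ -1} |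
          (x : ZMod p) = 1 ∨ (x : ZMod p) = -2⁻¹ ∨ (x : ZMod p) = -2} ∧
      Nat.card (MulAction.orbit H s) = 3) ∧
    Nat.card {o : MulAction.orbitRel.Quotient H {x : ZMod p // x ≠ 0 ∧ x ≠ -1} //
      Nat.card o.orbit = 6} = (p - 5) / 6 := by
  classical
  have h2 := aux_two (p := p) hp11
  have hone1 : (1 : ZMod p) ≠ -1 := by
    intro h; exact h2 (by linear_combination h)
  set Q := MulAction.orbitRel.Quotient H {x : ZMod p // x ≠ 0 ∧ x ≠ -1} with hQ
  haveI : Fintype Q := Fintype.ofFinite _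
  let s1 : {x : ZMod p // x ≠ 0 ∧ x ≠ -1} := ⟨1, one_ne_zero, hone1⟩
  have horb1 := orbit_one hp11 hf hg H hH s1 rfl
  let o1 : Q := Quotient.mk'' s1
  -- characterization of being in the class of s1
  have hkey : ∀ t : {x : ZMod p // x ≠ 0 ∧ x ≠ -1},
      (Quotient.mk'' t : Q) = o1 ↔
      ((t : ZMod p) = 1 ∨ (t : ZMod p) = -2⁻¹ ∨ (t : ZMod p) = -2) := by
    intro t
    rw [Quotient.eq'']
    change MulAction.orbitRel H _ t s1 ↔ _
    rw [MulAction.orbitRel_apply, horb1.1]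
    simp [Set.mem_setOf_eq]
  have corb : ∀ o : Q, Nat.card o.orbit = if o = o1 then 3 else 6 := by
    intro o
    induction o using Quotient.inductionOn' with
    | h t =>
      rw [MulAction.orbitRel.Quotient.orbit_mk]
      by_cases hc : (Quotient.mk'' t : Q) = o1
      · rw [if_pos hc]
        have hto : t ∈ MulAction.orbit H s1 := by
          rw [horb1.1]; exact (hkey t).mp hc
        rw [MulAction.orbit_eq_iff.mpr hto]
        exact horb1.2
      · rw [if_neg hc]
        have ht : ¬((t : ZMod p) = 1 ∨ (t : ZMod p) = -2⁻¹ ∨ (t : ZMod p) = -2) :=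
          fun h => hc ((hkey t).mpr h)
        push_neg at ht
        exact card_orbit_six hp11 h3 hf hg H hH t ht.1 ht.2.2 ht.2.1
  -- total count
  have cardT : Nat.card {x : ZMod p // x ≠ 0 ∧ x ≠ -1} = p - 2 := by
    rw [Nat.card_eq_fintype_card]
    have e : Fintype.card {x : ZMod p // x ≠ 0 ∧ x ≠ -1} =
        Fintype.card {x : ZMod p // ¬(x = 0 ∨ x = -1)} :=
      Fintype.card_congr (Equiv.subtypeEquivRight (fun x => by tauto))
    rw [e, Fintype.card_subtype_compl]
    have e2 : Fintype.card {x : ZMod p // x = 0 ∨ x = -1} = 2 := by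
      rw [Fintype.card_subtype]
      have e3 : (Finset.univ.filter fun x : ZMod p => x = 0 ∨ x = -1) =
          ({0, -1} : Finset (ZMod p)) := by
        ext z; simp
      rw [e3, Finset.card_insert_of_notMem (by
        simp only [Finset.mem_singleton]
        intro h
        exact one_ne_zero (α := ZMod p) (by linear_combination h)), Finset.card_singleton]
    rw [e2, ZMod.card]
  have hsig : Nat.card {x : ZMod p // x ≠ 0 ∧ x ≠ -1} = ∑ o : Q, Nat.card o.orbit := by
    haveI : ∀ o : Q, Fintype o.orbit := fun o => Fintype.ofFinite _
    rw [Nat.card_congr (MulAction.selfEquivSigmaOrbits' H _)]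
    simp [Nat.card_eq_fintype_card, Fintype.card_sigma]
    rfl
  have hsum2 : ∑ o : Q, Nat.card o.orbit = 3 + 6 * (Fintype.card Q - 1) := by
    rw [← Finset.add_sum_erase _ _ (Finset.mem_univ o1)]
    have : ∑ o ∈ Finset.univ.erase o1, Nat.card o.orbit =
        ∑ _o ∈ Finset.univ.erase o1, 6 := by
      refine Finset.sum_congr rfl fun o ho => ?_
      rw [corb o, if_neg (Finset.mem_erase.mp ho).1]
    rw [this, Finset.sum_const, corb o1, if_pos rfl, Finset.card_erase_of_mem
      (Finset.mem_univ o1), Finset.card_univ, smul_eq_mul]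
    ring
  have hNpos : 1 ≤ Fintype.card Q := Fintype.card_pos_iff.mpr ⟨o1⟩
  have hodd : p % 2 = 1 := Nat.odd_iff.mp ((Fact.out : p.Prime).odd_of_ne_two (by omega))
  have heq : p - 2 = 3 + 6 * (Fintype.card Q - 1) := by rw [← cardT, hsig, hsum2]
  refine ⟨?_, fun s hs => orbit_one hp11 hf hg H hH s hs, ?_⟩
  · have hN' : Fintype.card Q = (p + 1) / 6 := by omega
    rw [Nat.card_eq_fintype_card]
    exact hN'
  · have hiff : ∀ o : Q, (Nat.card o.orbit = 6) ↔ ¬(o = o1) := by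
      intro o
      rw [corb o]
      by_cases h : o = o1 <;> simp [h]
    have hN2 : Fintype.card Q - 1 = (p - 5) / 6 := by omega
    rw [Nat.card_congr (Equiv.subtypeEquivRight hiff), Nat.card_eq_fintype_card,
      Fintype.card_subtype_compl, Fintype.card_subtype_eq]
    exact hN2
end

section
/- For a prime p, s·q_p(s) - (s+1)·q_p(s+1) ≡ f(s+1) (mod p) for 1 ≤ s ≤ p-2, where f(u) = Σ_{j=1}^{p-1} u^j / j computed in Z/pZ (with 1/j the inverse of j mod p). -/
/-- `f(u) = ∑_{j=1}^{p-1} u^j / j` computed in `ZMod p`. -/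
def fsum (p : ℕ) (u : ZMod p) : ZMod p :=
  ∑ j ∈ Finset.Icc 1 (p - 1), u ^ j * (j : ZMod p)⁻¹

lemma choose_sub_one_cast (p : ℕ) (hp : p.Prime) :
    ∀ k, k < p → ((Nat.choose (p - 1) k : ZMod p)) = (-1) ^ k := by
  intro k
  induction k with
  | zero => simp
  | succ k ih =>
    intro hk
    have hpas : Nat.choose p (k + 1) = Nat.choose (p - 1) k + Nat.choose (p - 1) (k + 1) := by
      conv_lhs => rw [show p = (p - 1) + 1 by omega]
      exact Nat.choose_succ_succ _ _
    have hdvd : p ∣ Nat.choose p (k + 1) :=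
      hp.dvd_choose_self (by omega) hk
    have h0 : ((Nat.choose p (k + 1) : ZMod p)) = 0 :=
      (ZMod.natCast_eq_zero_iff _ _).mpr hdvd
    have := congrArg (Nat.cast : ℕ → ZMod p) hpas
    push_cast at this
    rw [h0, ih (by omega)] at this
    rw [pow_succ]
    linear_combination -this

theorem fermatQuotient_eq_fsum (p : ℕ) (hp : p.Prime) (s : ℕ)
    (h1 : 1 ≤ s) (h2 : s ≤ p - 2) :
    (((s : ℤ) * fermatQuotient p s - ((s : ℤ) + 1) * fermatQuotient p ((s : ℤ) + 1) : ℤ) :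
      ZMod p) = fsum p ((s : ZMod p) + 1) := by
  have hp2 := hp.two_le
  have hne2 : p ≠ 2 := by rintro rfl; omega
  have hp3 : 3 ≤ p := by omega
  have hodd : Odd p := hp.odd_of_ne_two hne2
  haveI : Fact p.Prime := ⟨hp⟩
  have hpz : ((p : ℤ)) ≠ 0 := by exact_mod_cast hp.pos.ne'
  -- s and s+1 are nonzero mod p
  have hslt : s < p := by omega
  have hs1lt : s + 1 < p := by omega
  have hsne : ((s : ℤ) : ZMod p) ≠ 0 := by
    rw [Int.cast_natCast, Ne, ZMod.natCast_eq_zero_iff]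
    intro h; exact absurd (Nat.le_of_dvd (by omega) h) (by omega)
  have hs1ne : ((((s : ℤ) + 1 : ℤ)) : ZMod p) ≠ 0 := by
    rw [show ((s : ℤ) + 1 : ℤ) = ((s + 1 : ℕ) : ℤ) by push_cast; ring, Int.cast_natCast, Ne,
      ZMod.natCast_eq_zero_iff]
    intro h; exact absurd (Nat.le_of_dvd (by omega) h) (by omega)
  -- Fermat's little theorem divisibilities
  have fermat : ∀ u : ℤ, (u : ZMod p) ≠ 0 → (p : ℤ) ∣ u ^ (p - 1) - 1 := by
    intro u hu
    rw [← ZMod.intCast_zmod_eq_zero_iff_dvd]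
    push_cast
    rw [ZMod.pow_card_sub_one_eq_one hu]
    ring
  have hds := fermat s hsne
  have hds1 := fermat ((s : ℤ) + 1) hs1ne
  set x : ℤ := (s : ℤ) + 1 with hx
  set Q : ℤ → ℤ := fun u => (u ^ (p - 1) - 1) / (p : ℤ) with hQ
  have hmulQ : ∀ u : ℤ, (p : ℤ) ∣ u ^ (p - 1) - 1 → (p : ℤ) * (u * Q u) = u ^ p - u := by
    intro u hu
    have : (p : ℤ) * Q u = u ^ (p - 1) - 1 := Int.mul_ediv_cancel' hu
    calc (p : ℤ) * (u * Q u) = u * ((p : ℤ) * Q u) := by ring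
      _ = u * (u ^ (p - 1) - 1) := by rw [this]
      _ = u ^ p - u := by
          rw [show u * (u ^ (p - 1) - 1) = u ^ (p - 1) * u - u by ring, ← pow_succ,
            show p - 1 + 1 = p by omega]
  -- the integer N
  set N : ℤ := (s : ℤ) * Q (s : ℤ) - x * Q x with hN
  -- binomial identity
  have hbin : (p : ℤ) * N = ∑ j ∈ Finset.Icc 1 (p - 1), (-1) ^ (j + p) * (Nat.choose p j : ℤ) * x ^ j := by
    have hexp : ((s : ℤ)) ^ p = (x - 1) ^ p := by rw [hx]; ring_nf
    rw [hN, mul_sub, hmulQ _ hds, hmulQ _ hds1, hexp, sub_pow]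
    have hsplit : Finset.range (p + 1) = insert 0 (insert p (Finset.Icc 1 (p - 1))) := by
      ext j
      simp only [Finset.mem_range, Finset.mem_insert, Finset.mem_Icc]
      omega
    rw [hsplit, Finset.sum_insert (by simp only [Finset.mem_insert, Finset.mem_Icc]; omega),
      Finset.sum_insert (by simp only [Finset.mem_Icc]; omega)]
    have hp0 : ((-1 : ℤ)) ^ (0 + p) = -1 := by
      rw [zero_add, Odd.neg_one_pow hodd]
    have hpp : ((-1 : ℤ)) ^ (p + p) = 1 := by
      rw [Even.neg_one_pow ⟨p, rfl⟩]
    rw [hp0, hpp]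
    have : ∀ j ∈ Finset.Icc 1 (p - 1),
        (-1 : ℤ) ^ (j + p) * x ^ j * (1 : ℤ) ^ (p - j) * (Nat.choose p j : ℤ)
          = (-1) ^ (j + p) * (Nat.choose p j : ℤ) * x ^ j := by
      intro j hj; rw [one_pow]; ring
    rw [Finset.sum_congr rfl this]
    simp [Nat.sub_self]
    ring
  -- pull out factor p from the sum
  set c : ℕ → ℕ := fun j => Nat.choose p j / p with hc
  have hcp : ∀ j ∈ Finset.Icc 1 (p - 1), (Nat.choose p j : ℤ) = (p : ℤ) * (c j : ℤ) := by
    intro j hj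
    simp only [Finset.mem_Icc] at hj
    have hdvd : p ∣ Nat.choose p j := hp.dvd_choose_self (by omega) (by omega)
    rw [hc]
    exact_mod_cast (Nat.mul_div_cancel' hdvd).symm
  have hNval : N = ∑ j ∈ Finset.Icc 1 (p - 1), (-1) ^ (j + p) * (c j : ℤ) * x ^ j := by
    apply mul_left_cancel₀ hpz
    rw [hbin, Finset.mul_sum]
    apply Finset.sum_congr rfl
    intro j hj
    rw [hcp j hj]; ring
  -- cast to ZMod p
  have hcast : ∀ j ∈ Finset.Icc 1 (p - 1), ((c j : ZMod p)) = (-1) ^ (j - 1) * (j : ZMod p)⁻¹ := by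
    intro j hj
    simp only [Finset.mem_Icc] at hj
    have hjne : (j : ZMod p) ≠ 0 := by
      rw [Ne, ZMod.natCast_eq_zero_iff]
      intro h; exact absurd (Nat.le_of_dvd (by omega) h) (by omega)
    have hdvd : p ∣ Nat.choose p j := hp.dvd_choose_self (by omega) (by omega)
    have key : p * Nat.choose (p - 1) (j - 1) = Nat.choose p j * j := by
      have := Nat.add_one_mul_choose_eq (p - 1) (j - 1)
      rwa [show p - 1 + 1 = p by omega, show j - 1 + 1 = j by omega] at this
    have key2 : Nat.choose (p - 1) (j - 1) = c j * j := by
      have hcj : Nat.choose p j = p * c j := (Nat.mul_div_cancel' hdvd).symm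
      rw [hcj] at key
      have : p * Nat.choose (p - 1) (j - 1) = p * (c j * j) := by rw [key]; ring
      exact Nat.eq_of_mul_eq_mul_left hp.pos this
    have hc1 : ((Nat.choose (p - 1) (j - 1) : ZMod p)) = (-1) ^ (j - 1) :=
      choose_sub_one_cast p hp (j - 1) (by omega)
    have := congrArg (Nat.cast : ℕ → ZMod p) key2
    push_cast at this
    rw [hc1] at this
    have h' : ((c j : ZMod p)) * (j : ZMod p) = (-1) ^ (j - 1) := this.symm
    calc ((c j : ZMod p)) = (c j : ZMod p) * ((j : ZMod p) * (j : ZMod p)⁻¹) := by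
          rw [mul_inv_cancel₀ hjne, mul_one]
      _ = (-1) ^ (j - 1) * (j : ZMod p)⁻¹ := by rw [← mul_assoc, h']
  -- final computation
  have hfq : ∀ u : ℤ, ((fermatQuotient p u : ZMod p)) = ((Q u : ZMod p)) := by
    intro u
    rw [fermatQuotient, ZMod.intCast_mod]
  trans ((N : ℤ) : ZMod p)
  · push_cast [hfq]
    rw [hN]
    push_cast
    ring
  rw [hNval]
  push_cast
  rw [fsum]
  apply Finset.sum_congr rfl
  intro j hj
  simp only [Finset.mem_Icc] at hj
  rw [hcast j (by simp [Finset.mem_Icc]; omega)]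
  have hsign : ((-1 : ZMod p)) ^ (j + p) * (-1) ^ (j - 1) = 1 := by
    rw [← pow_add, Even.neg_one_pow]
    obtain ⟨m, hm⟩ := hodd
    exact ⟨j + m, by omega⟩
  have hxcast : ((x : ℤ) : ZMod p) = (s : ZMod p) + 1 := by rw [hx]; push_cast; ring
  calc (-1 : ZMod p) ^ (j + p) * ((-1) ^ (j - 1) * (j : ZMod p)⁻¹) * ((x : ℤ) : ZMod p) ^ j
      = ((-1 : ZMod p) ^ (j + p) * (-1) ^ (j - 1)) * (((x : ℤ) : ZMod p) ^ j * (j : ZMod p)⁻¹) := by ring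
    _ = ((s : ZMod p) + 1) ^ j * (j : ZMod p)⁻¹ := by rw [hsign, hxcast, one_mul]
end

section
/- Let p ≥ 5 be prime with p ≡ 1 (mod 3) and let s ∈ {1,...,p-2} be a root of s² + s + 1 ≡ 0 (mod p). Then θ_{p,s} = 0, where θ_{p,s} is the Legendre symbol of 2s(s+1)(s·q_p(s) - (s+1)·q_p(s+1)) mod p. Consequently N_0(p) ≥ 2 for p ≡ 1 (mod 3), where N_0(p) = #{s ∈ {1,...,p-2} : θ_{p,s} = 0}. -/
/-- Binomial for square-zero elements: `(x+y)^m = x^m + m x^(m-1) y` if `y^2 = 0`. -/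
lemma sq_zero_add_pow {R : Type*} [CommRing R] {y : R} (hy : y * y = 0) :
    ∀ (m : ℕ) (x : R), (x + y) ^ m = x ^ m + (m : R) * x ^ (m - 1) * y := by
  intro m
  induction m with
  | zero => intro x; simp
  | succ m ih =>
    intro x
    rcases Nat.eq_zero_or_pos m with hm | hm
    · subst hm; simp
    · have h1 : (x + y) ^ (m + 1) = (x + y) ^ m * (x + y) := by ring
      rw [h1, ih x]
      have h2 : x ^ (m - 1) * x = x ^ m := by
        rw [← pow_succ, Nat.sub_add_cancel hm]
      have h3 : (m + 1 : ℕ) - 1 = m := by omega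
      rw [h3]
      push_cast
      linear_combination (m : R) * x ^ (m - 1) * hy + ((m : R) * y) * h2

lemma transfer (p : ℕ) [Fact p.Prime] (x : ℤ)
    (h : (((p : ℤ) * x : ℤ) : ZMod (p ^ 2)) = 0) : ((x : ℤ) : ZMod p) = 0 := by
  have hp0 : (p : ℤ) ≠ 0 := by
    exact_mod_cast (Fact.out : p.Prime).ne_zero
  rw [ZMod.intCast_zmod_eq_zero_iff_dvd] at h ⊢
  push_cast at h
  obtain ⟨c, hc⟩ := h
  exact ⟨c, mul_left_cancel₀ hp0 (by linear_combination hc)⟩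

lemma key (p : ℕ) [Fact p.Prime] (hp5 : 5 ≤ p) (n : ℤ)
    (hroot : (p : ℤ) ∣ n ^ 2 + n + 1) :
    ((n * fermatQuotient p n - (n + 1) * fermatQuotient p (n + 1) : ℤ) : ZMod p) = 0 := by
  have hp : p.Prime := Fact.out
  have hp0 : (p : ℤ) ≠ 0 := by exact_mod_cast hp.ne_zero
  have hp1 : (1 : ℤ) < p := by exact_mod_cast hp.one_lt
  have hodd : Odd p := hp.odd_of_ne_two (by omega)
  have hev : Even (p - 1) := Nat.Odd.sub_odd hodd odd_one
  have hodd2 : Odd (p - 2) := by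
    obtain ⟨t, ht⟩ := hodd
    exact ⟨t - 1, by omega⟩
  -- coprimality
  have hpn : ¬ (p : ℤ) ∣ n := by
    intro h
    have h1 : (p : ℤ) ∣ 1 := by
      have := dvd_sub hroot ((h.mul_right (n + 1)))
      convert this using 1; rfl; ring
    have := Int.le_of_dvd one_pos h1
    omega
  have hpn1 : ¬ (p : ℤ) ∣ (n + 1) := by
    intro h
    have h1 : (p : ℤ) ∣ 1 := by
      have := dvd_sub hroot ((h.mul_right n))
      convert this using 1; rfl; ring
    have := Int.le_of_dvd one_pos h1
    omega
  -- Fermat's little theorem divisibilities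
  have hn0 : ((n : ℤ) : ZMod p) ≠ 0 := by
    rw [Ne, ZMod.intCast_zmod_eq_zero_iff_dvd]; exact hpn
  have hn10 : (((n + 1 : ℤ)) : ZMod p) ≠ 0 := by
    rw [Ne, ZMod.intCast_zmod_eq_zero_iff_dvd]; exact hpn1
  have hA : (p : ℤ) ∣ n ^ (p - 1) - 1 := by
    rw [← ZMod.intCast_zmod_eq_zero_iff_dvd]
    push_cast
    rw [ZMod.pow_card_sub_one_eq_one hn0]
    ring
  have hB : (p : ℤ) ∣ (n + 1) ^ (p - 1) - 1 := by
    rw [← ZMod.intCast_zmod_eq_zero_iff_dvd]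
    push_cast
    rw [show ((n : ZMod p) + 1) = ((n + 1 : ℤ) : ZMod p) by push_cast; ring,
      ZMod.pow_card_sub_one_eq_one hn10]
    ring
  obtain ⟨a, ha⟩ := hA
  obtain ⟨b, hb⟩ := hB
  obtain ⟨k, hk⟩ := hroot
  -- work in ZMod (p^2)
  set R := ZMod (p ^ 2) with hR
  have hPP : (p : R) * (p : R) = 0 := by
    have h0 : ((p ^ 2 : ℕ) : R) = 0 := ZMod.natCast_self _
    push_cast at h0
    linear_combination h0
  set N : R := ((n : ℤ) : R) with hN
  set A : R := ((a : ℤ) : R) with hA'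
  set B : R := ((b : ℤ) : R) with hB'
  set K : R := ((k : ℤ) : R) with hK'
  have h1R : N ^ (p - 1) = 1 + (p : R) * A := by
    have := congrArg (Int.cast : ℤ → R) ha
    push_cast at this
    linear_combination this
  have h2R : (N + 1) ^ (p - 1) = 1 + (p : R) * B := by
    have := congrArg (Int.cast : ℤ → R) hb
    push_cast at this
    linear_combination this
  have h3R : N ^ 2 + N + 1 = (p : R) * K := by
    have := congrArg (Int.cast : ℤ → R) hk
    push_cast at this
    linear_combination this
  have hcast : ((p - 1 : ℕ) : R) = (p : R) - 1 := by
    rw [Nat.cast_sub (by omega : 1 ≤ p), Nat.cast_one]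
  -- E1 : p * (3a + k(n-1)) = 0 in ZMod p
  have hcube : N ^ 3 = 1 + (p : R) * K * (N - 1) := by
    linear_combination (N - 1) * h3R
  have hleft : N ^ (3 * (p - 1)) = 1 + 3 * ((p : R) * A) := by
    rw [mul_comm, pow_mul, h1R]
    linear_combination (3 * A ^ 2 + (p : R) * A ^ 3) * hPP
  have yE1 : ((p : R) * K * (N - 1)) * ((p : R) * K * (N - 1)) = 0 := by
    linear_combination (K * (N - 1) * K * (N - 1)) * hPP
  have hright : N ^ (3 * (p - 1)) = 1 - (p : R) * (K * (N - 1)) := by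
    rw [pow_mul, hcube, sq_zero_add_pow yE1 (p - 1) 1, hcast]
    linear_combination (K * (N - 1)) * hPP
  have hE1R : (((p : ℤ) * (3 * a + k * (n - 1)) : ℤ) : R) = 0 := by
    push_cast
    linear_combination hright - hleft
  have e1 : ((3 * a + k * (n - 1) : ℤ) : ZMod p) = 0 := transfer p _ hE1R
  -- E2 : p * (b - 2a - (n^2)^(p-2) k) = 0 in ZMod p
  have yE2 : ((p : R) * K) * ((p : R) * K) = 0 := by
    linear_combination (K * K) * hPP
  have hNp1 : N + 1 = -N ^ 2 + (p : R) * K := by linear_combination h3R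
  have hE2cast : (1 : R) + (p : R) * B = 1 + (p : R) * (2 * A + (N ^ 2) ^ (p - 2) * K) := by
    have e0 : (1 : R) + (p : R) * B = (-N ^ 2 + (p : R) * K) ^ (p - 1) := by
      rw [← h2R, ← hNp1]
    rw [e0, sq_zero_add_pow yE2]
    have hneg1 : (-N ^ 2 : R) ^ (p - 1) = (N ^ (p - 1)) ^ 2 := by
      rw [hev.neg_pow, ← pow_mul, ← pow_mul, Nat.mul_comm]
    have hneg2 : (-N ^ 2 : R) ^ (p - 1 - 1) = -((N ^ 2) ^ (p - 2)) := by
      rw [show p - 1 - 1 = p - 2 from by omega, hodd2.neg_pow]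
    rw [hneg1, hneg2, h1R, hcast]
    linear_combination (A ^ 2 - (N ^ 2) ^ (p - 2) * K) * hPP
  have hE2R : (((p : ℤ) * (b - 2 * a - (n ^ 2) ^ (p - 2) * k) : ℤ) : R) = 0 := by
    push_cast
    linear_combination hE2cast
  have e2 : ((b - 2 * a - (n ^ 2) ^ (p - 2) * k : ℤ) : ZMod p) = 0 := transfer p _ hE2R
  -- now work in ZMod p
  set n' : ZMod p := ((n : ℤ) : ZMod p) with hn'
  set a' : ZMod p := ((a : ℤ) : ZMod p) with ha''
  set b' : ZMod p := ((b : ℤ) : ZMod p) with hb''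
  set k' : ZMod p := ((k : ℤ) : ZMod p) with hk''
  push_cast at e1 e2
  have h3' : n' ^ 2 + n' + 1 = 0 := by
    have := congrArg (Int.cast : ℤ → ZMod p) hk
    push_cast at this
    rw [ZMod.natCast_self] at this
    simpa using this
  have hcube' : n' ^ 3 = 1 := by linear_combination (n' - 1) * h3'
  have hfer : n' ^ (p - 1) = 1 := ZMod.pow_card_sub_one_eq_one hn0
  have hpow : (n' ^ 2) ^ (p - 2) = n' := by
    have h1 : (n' ^ 2) ^ (p - 2) * n' ^ 2 = 1 := by
      rw [← pow_mul, ← pow_add, show 2 * (p - 2) + 2 = (p - 1) * 2 from by omega,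
        pow_mul, hfer, one_pow]
    have h2 : n' * n' ^ 2 = 1 := by
      rw [show n' * n' ^ 2 = n' ^ 3 from by ring, hcube']
    exact mul_right_cancel₀ (pow_ne_zero 2 hn0) (h1.trans h2.symm)
  rw [hpow] at e2
  -- rewrite fermat quotients
  have hfa : fermatQuotient p n = a % (p : ℤ) := by
    unfold fermatQuotient
    rw [ha, Int.mul_ediv_cancel_left _ hp0]
  have hfb : fermatQuotient p (n + 1) = b % (p : ℤ) := by
    unfold fermatQuotient
    rw [hb, Int.mul_ediv_cancel_left _ hp0]
  rw [hfa, hfb]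
  push_cast [ZMod.intCast_mod]
  -- goal : n' * a' - (n' + 1) * b' = 0
  have h30 : (3 : ZMod p) ≠ 0 := by
    have : ((3 : ℕ) : ZMod p) ≠ 0 := by
      rw [Ne, ZMod.natCast_eq_zero_iff]
      intro h
      have := Nat.le_of_dvd (by norm_num) h
      omega
    simpa using this
  have h3G : (3 : ZMod p) * (n' * a' - (n' + 1) * b') = 0 := by
    linear_combination (-(n' + 2)) * e1 + (-(3 * (n' + 1))) * e2 + (-(2 * k')) * h3'
  have := mul_eq_zero.mp h3G
  rcases this with h | h
  · exact absurd h h30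
  · linear_combination h

theorem theta_zero_at_roots (p : ℕ) [Fact p.Prime] (hp5 : 5 ≤ p) (h3 : p % 3 = 1) :
    (∀ s : ℕ, s ∈ Finset.Icc 1 (p - 2) → (s : ZMod p) ^ 2 + (s : ZMod p) + 1 = 0 →
      theta p (s : ℤ) = 0) ∧
    2 ≤ ((Finset.Icc 1 (p - 2)).filter (fun s : ℕ => theta p (s : ℤ) = 0)).card := by
  have hp : p.Prime := Fact.out
  have hmain : ∀ s : ℕ, s ∈ Finset.Icc 1 (p - 2) → (s : ZMod p) ^ 2 + (s : ZMod p) + 1 = 0 →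
      theta p (s : ℤ) = 0 := by
    intro s _ hs
    have hroot : (p : ℤ) ∣ (s : ℤ) ^ 2 + (s : ℤ) + 1 := by
      rw [← ZMod.intCast_zmod_eq_zero_iff_dvd]
      push_cast
      exact_mod_cast hs
    have hk := key p hp5 (s : ℤ) hroot
    rw [theta, legendreSym.eq_zero_iff]
    push_cast at hk ⊢
    linear_combination (2 * ((s : ℕ) : ZMod p) * (((s : ℕ) : ZMod p) + 1)) * hk
  refine ⟨hmain, ?_⟩
  -- find a primitive cube root of unity
  haveI : Fact (Nat.Prime 3) := ⟨by norm_num⟩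
  have hdvd : 3 ∣ Fintype.card (ZMod p)ˣ := by
    rw [ZMod.card_units]
    omega
  obtain ⟨u, hu⟩ := exists_prime_orderOf_dvd_card 3 hdvd
  set ω : ZMod p := (u : ZMod p) with hω
  have hω3 : ω ^ 3 = 1 := by
    have : u ^ 3 = 1 := by rw [← hu]; exact pow_orderOf_eq_one u
    have := congrArg (Units.val) this
    push_cast at this
    exact_mod_cast this
  have hω1 : ω ≠ 1 := by
    intro h
    have : u = 1 := Units.val_eq_one.mp h
    rw [this, orderOf_one] at hu
    omega
  have hroot1 : ω ^ 2 + ω + 1 = 0 := by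
    have h0 : (ω - 1) * (ω ^ 2 + ω + 1) = 0 := by linear_combination hω3
    rcases mul_eq_zero.mp h0 with h | h
    · exact absurd (by linear_combination h) hω1
    · exact h
  have hroot2 : (ω ^ 2) ^ 2 + ω ^ 2 + 1 = 0 := by
    linear_combination ω * hω3 + hroot1
  -- a root gives a member of the filtered set
  have hmem : ∀ x : ZMod p, x ^ 2 + x + 1 = 0 →
      x.val ∈ (Finset.Icc 1 (p - 2)).filter (fun s : ℕ => theta p (s : ℤ) = 0) := by
    intro x hx
    have hxcast : ((x.val : ℕ) : ZMod p) = x := by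
      simp [ZMod.natCast_val, ZMod.cast_id]
    have hx0 : x ≠ 0 := by
      intro h
      rw [h] at hx
      simpa using hx
    have hxm1 : x ≠ -1 := by
      intro h
      rw [h] at hx
      norm_num at hx
    have hlb : 1 ≤ x.val := by
      rcases Nat.eq_zero_or_pos x.val with h | h
      · exact absurd (by rw [← hxcast, h]; simp) hx0
      · exact h
    have hub : x.val ≤ p - 2 := by
      have hlt : x.val < p := ZMod.val_lt x
      have : x.val ≠ p - 1 := by
        intro h
        apply hxm1
        rw [← hxcast, h]
        push_cast [Nat.cast_sub (show 1 ≤ p by omega)]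
        simp
      omega
    have hicc : x.val ∈ Finset.Icc 1 (p - 2) := Finset.mem_Icc.mpr ⟨hlb, hub⟩
    refine Finset.mem_filter.mpr ⟨hicc, hmain x.val hicc ?_⟩
    rw [hxcast]
    exact hx
  have hne : ω.val ≠ (ω ^ 2).val := by
    intro h
    have h2 : ω = ω ^ 2 := by
      have := congrArg (fun t : ℕ => (t : ZMod p)) h
      simpa [ZMod.natCast_val, ZMod.cast_id] using this
    have h0 : ω * (ω - 1) = 0 := by linear_combination -h2
    rcases mul_eq_zero.mp h0 with h' | h'
    · rw [h'] at hroot1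
      norm_num at hroot1
    · exact hω1 (by linear_combination h')
  rw [show (2 : ℕ) = 1 + 1 from rfl]
  refine Nat.succ_le_of_lt (Finset.one_lt_card.mpr ⟨ω.val, hmem ω hroot1, (ω ^ 2).val,
    hmem (ω ^ 2) hroot2, hne⟩)
end
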